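/- arXiv:1909.10228 — 4 statements merged into one kernel-verified Lean document; each statement's English description precedes it below -/
import Mathlib

section
/- Let M ⊂ ℝ^D be a closed set with reach(M) = τ > 0. Then for any two distinct points x, y ∈ M, the distance from y to the tangent space T_x M (as an affine subspace through x) satisfies d(y, T_x M) ≤ ‖x − y‖₂² / (2τ). -/
open Metric Set Filter
open scoped Topology RealInnerProductSpace

namespace Federer

/-! Arithmetic helpers (minimal context to keep linarith small). -/

private lemma arith_key {d h ε Z Q : ℝ} (hdZ : d ≤ Z) (hQ : |Q| ≤ ε)
    (hd : 0 < d) (hh : 0 < h) :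
    (d + h)^2 - 2*h*ε ≤ Z^2 + 2*(h*(d + Q)) + h^2 := by
  obtain ⟨hQ1, hQ2⟩ := abs_le.mp hQ
  nlinarith [sq_nonneg (Z - d), mul_le_mul_of_nonneg_left hQ1 hh.le]

private lemma arith_low {c d₀ d h ε : ℝ} (hcd : c * d₀ = 2*h*ε) (hc2 : c^2 ≤ 2*h*ε)
    (hd₀d : d₀ ≤ d) (hc : 0 ≤ c) (hh : 0 ≤ h) :
    (d + h - c)^2 ≤ (d + h)^2 - 2*h*ε := by
  nlinarith [mul_le_mul_of_nonneg_left hd₀d hc, mul_nonneg hc hh]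

private lemma arith_inner {R η d₀ L X W2 : ℝ} (hsq : (R - η)^2 ≤ d₀^2 + 2*(d₀*X) + W2)
    (hW2 : W2 ≤ L^2) (hRdL : R = d₀ + L) (hη : 0 ≤ η) :
    d₀*L - R*η ≤ d₀*X := by
  subst hRdL
  nlinarith [sq_nonneg η]

private lemma arith_wL {d₀ L R η X W2 : ℝ} (hin : d₀*L - R*η ≤ d₀*X) (hW2 : W2 ≤ L^2)
    (hL : 0 ≤ L) (hd₀ : 0 < d₀) :
    (W2 - 2*(L*X) + L^2) * d₀ ≤ 2*L*(R*η) := by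
  nlinarith [mul_le_mul_of_nonneg_left hin (by linarith : (0:ℝ) ≤ 2*L),
    mul_le_mul_of_nonneg_right hW2 hd₀.le]

private lemma arith_sq2 {S d₀ L R η B : ℝ} (h1 : S^2 * d₀ ≤ 2*L*(R*η))
    (h2 : η * (2*L*R + 1) ≤ B * d₀) (hd₀ : 0 < d₀) (hη : 0 ≤ η) :
    S^2 ≤ B := by
  nlinarith

variable {D : ℕ}

noncomputable def proj {M : Set (EuclideanSpace ℝ (Fin D))} (hM : IsClosed M)
    (hne : M.Nonempty) (z : EuclideanSpace ℝ (Fin D)) : EuclideanSpace ℝ (Fin D) :=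
  (hM.exists_infDist_eq_dist hne z).choose

variable {M : Set (EuclideanSpace ℝ (Fin D))} {τ : ℝ}

lemma proj_spec (hM : IsClosed M) (hne : M.Nonempty) (z : EuclideanSpace ℝ (Fin D)) :
    proj hM hne z ∈ M ∧ dist z (proj hM hne z) = infDist z M := by
  obtain ⟨hp, he⟩ := (hM.exists_infDist_eq_dist hne z).choose_spec
  exact ⟨hp, he.symm⟩

lemma proj_modulus (hM : IsClosed M) (hne : M.Nonempty)
    (hr : ∀ z : EuclideanSpace ℝ (Fin D), infDist z M < τ →
      ∃! p, p ∈ M ∧ dist z p = infDist z M)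
    {R : ℝ} (hR : R < τ) {K : Set (EuclideanSpace ℝ (Fin D))}
    (hK : IsCompact K) (hKR : ∀ z ∈ K, infDist z M ≤ R) :
    ∀ ε > 0, ∃ δ > 0, ∀ z ∈ K, ∀ w ∈ K, dist z w ≤ δ →
      dist (proj hM hne z) (proj hM hne w) ≤ ε := by
  intro ε hε
  by_contra hcon
  push_neg at hcon
  have key : ∀ n : ℕ, ∃ z ∈ K, ∃ w ∈ K, dist z w ≤ 1/((n:ℝ)+1) ∧
      ε < dist (proj hM hne z) (proj hM hne w) := by
    intro n
    exact hcon _ (by positivity)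
  choose a haK b hbK hab hd using key
  obtain ⟨α, hαK, φ₁, hφ₁, hA⟩ := hK.tendsto_subseq haK
  obtain ⟨C, hC⟩ := hK.isBounded.subset_closedBall α
  have hprojball : ∀ z ∈ K, proj hM hne z ∈ closedBall α (C + R) := by
    intro z hz
    have h1 : dist z α ≤ C := by simpa [mem_closedBall] using hC hz
    have h2 : dist z (proj hM hne z) = infDist z M := (proj_spec hM hne z).2
    have h3 : dist (proj hM hne z) α ≤ dist (proj hM hne z) z + dist z α := dist_triangle _ _ _
    have h4 : dist (proj hM hne z) z ≤ R := by
      rw [dist_comm, h2]; exact hKR z hz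
    simp only [mem_closedBall]
    calc dist (proj hM hne z) α ≤ dist (proj hM hne z) z + dist z α := h3
    _ ≤ R + C := by linarith
    _ = C + R := by ring
  obtain ⟨q₁, _, φ₂, hφ₂, hq₁⟩ := (isCompact_closedBall α (C + R)).tendsto_subseq
      (x := fun n => proj hM hne (a (φ₁ n))) (fun n => hprojball _ (haK (φ₁ n)))
  obtain ⟨q₂, _, φ₃, hφ₃, hq₂⟩ := (isCompact_closedBall α (C + R)).tendsto_subseq
      (x := fun n => proj hM hne (b (φ₁ (φ₂ n)))) (fun n => hprojball _ (hbK (φ₁ (φ₂ n))))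
  set ψ : ℕ → ℕ := fun n => φ₁ (φ₂ (φ₃ n)) with hψdef
  have hψmono : StrictMono ψ := hφ₁.comp (hφ₂.comp hφ₃)
  have hAψ : Tendsto (fun n => a (ψ n)) atTop (𝓝 α) := by
    have := hA.comp ((hφ₂.comp hφ₃).tendsto_atTop)
    simpa [Function.comp_def, hψdef] using this
  have hq₁ψ : Tendsto (fun n => proj hM hne (a (ψ n))) atTop (𝓝 q₁) := by
    have := hq₁.comp hφ₃.tendsto_atTop
    simpa [Function.comp_def, hψdef] using this
  have hq₂ψ : Tendsto (fun n => proj hM hne (b (ψ n))) atTop (𝓝 q₂) := by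
    simpa [Function.comp_def, hψdef] using hq₂
  have hdistab : Tendsto (fun n => dist (b (ψ n)) (a (ψ n))) atTop (𝓝 0) := by
    apply squeeze_zero (fun n => dist_nonneg) (fun n => ?_)
      tendsto_one_div_add_atTop_nhds_zero_nat
    calc dist (b (ψ n)) (a (ψ n)) = dist (a (ψ n)) (b (ψ n)) := dist_comm _ _
    _ ≤ 1/((ψ n : ℝ)+1) := hab _
    _ ≤ 1/((n:ℝ)+1) := by
        apply one_div_le_one_div_of_le (by positivity)
        have h5 : n ≤ ψ n := hψmono.le_apply
        have h6 : (n:ℝ) ≤ (ψ n : ℝ) := Nat.cast_le.mpr h5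
        linarith
  have hBψ : Tendsto (fun n => b (ψ n)) atTop (𝓝 α) := by
    rw [tendsto_iff_dist_tendsto_zero]
    apply squeeze_zero (fun n => dist_nonneg) (fun n => dist_triangle (b (ψ n)) (a (ψ n)) α)
    have h2 := (tendsto_iff_dist_tendsto_zero.mp hAψ)
    have := hdistab.add h2
    simpa using this
  have hq₁M : q₁ ∈ M :=
    hM.mem_of_tendsto hq₁ψ (Eventually.of_forall fun n => (proj_spec hM hne _).1)
  have hq₂M : q₂ ∈ M :=
    hM.mem_of_tendsto hq₂ψ (Eventually.of_forall fun n => (proj_spec hM hne _).1)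
  have hδα : infDist α M < τ := lt_of_le_of_lt (hKR α hαK) hR
  have hdista : dist α q₁ = infDist α M := by
    have h1 : Tendsto (fun n => dist (a (ψ n)) (proj hM hne (a (ψ n)))) atTop (𝓝 (dist α q₁)) :=
      hAψ.dist hq₁ψ
    have heq : (fun n => dist (a (ψ n)) (proj hM hne (a (ψ n)))) = fun n => infDist (a (ψ n)) M :=
      funext fun n => (proj_spec hM hne _).2
    have h2 : Tendsto (fun n => infDist (a (ψ n)) M) atTop (𝓝 (infDist α M)) :=
      ((continuous_infDist_pt M).tendsto α).comp hAψ
    rw [heq] at h1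
    exact tendsto_nhds_unique h1 h2
  have hdistb : dist α q₂ = infDist α M := by
    have h1 : Tendsto (fun n => dist (b (ψ n)) (proj hM hne (b (ψ n)))) atTop (𝓝 (dist α q₂)) :=
      hBψ.dist hq₂ψ
    have heq : (fun n => dist (b (ψ n)) (proj hM hne (b (ψ n)))) = fun n => infDist (b (ψ n)) M :=
      funext fun n => (proj_spec hM hne _).2
    have h2 : Tendsto (fun n => infDist (b (ψ n)) M) atTop (𝓝 (infDist α M)) :=
      ((continuous_infDist_pt M).tendsto α).comp hBψ
    rw [heq] at h1
    exact tendsto_nhds_unique h1 h2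
  have heq12 : q₁ = q₂ := (hr α hδα).unique ⟨hq₁M, hdista⟩ ⟨hq₂M, hdistb⟩
  have hge : ε ≤ dist q₁ q₂ := by
    have hT : Tendsto (fun n => dist (proj hM hne (a (ψ n))) (proj hM hne (b (ψ n)))) atTop
        (𝓝 (dist q₁ q₂)) := hq₁ψ.dist hq₂ψ
    exact ge_of_tendsto hT (Eventually.of_forall fun n => (hd (ψ n)).le)
  rw [heq12] at hge
  simp at hge
  linarith

noncomputable def polygon {M : Set (EuclideanSpace ℝ (Fin D))} (hM : IsClosed M)
    (hne : M.Nonempty) (h : ℝ) (z₀ : EuclideanSpace ℝ (Fin D)) : ℕ → EuclideanSpace ℝ (Fin D)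
  | 0 => z₀
  | k+1 =>
    let z := polygon hM hne h z₀ k
    z + h • ((infDist z M)⁻¹ • (z - proj hM hne z))

set_option maxHeartbeats 1000000 in
lemma propagation (hM : IsClosed M) (hne : M.Nonempty)
    (hr : ∀ z : EuclideanSpace ℝ (Fin D), infDist z M < τ →
      ∃! p, p ∈ M ∧ dist z p = infDist z M)
    {p ν : EuclideanSpace ℝ (Fin D)} {d₀ R : ℝ}
    (hp : p ∈ M) (hν : ‖ν‖ = 1) (hd₀ : 0 < d₀) (hd₀R : d₀ ≤ R) (hRτ : R < τ)
    (hreal : infDist (p + d₀ • ν) M = d₀) :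
    R ≤ infDist (p + R • ν) M := by
  rcases eq_or_lt_of_le hd₀R with heq | hL
  · rw [← heq, hreal]
  have hRpos : 0 < R := lt_trans hd₀ hL
  set z₀ := p + d₀ • ν with hz₀
  set L := R - d₀ with hLdef
  have hRdL : R = d₀ + L := by rw [hLdef]; ring
  have hLpos : 0 < L := by rw [hLdef]; linarith
  set K := closedBall z₀ L ∩ {w | infDist w M ≤ R} with hKdef
  have hKcomp : IsCompact K := (isCompact_closedBall z₀ L).inter_right
    (isClosed_le (continuous_infDist_pt M) continuous_const)
  have hKR : ∀ z ∈ K, infDist z M ≤ R := fun z hz => hz.2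
  have main : ∀ η' > 0, η' ≤ R → R - η' ≤ infDist (p + R • ν) M := by
    intro η' hη'pos hη'R
    obtain ⟨η, hηpos, hη2, hηle⟩ :
        ∃ η : ℝ, 0 < η ∧ η ≤ η'/2 ∧ η * (2*L*R + 1) ≤ (η'/2)^2 * d₀ := by
      refine ⟨min (η'/2) ((η'/2)^2 * d₀ / (2*L*R + 1)), lt_min (by positivity) (by positivity),
        min_le_left _ _, ?_⟩
      have h1 : min (η'/2) ((η'/2)^2 * d₀ / (2*L*R + 1)) ≤ (η'/2)^2 * d₀ / (2*L*R + 1) :=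
        min_le_right _ _
      have h2 : (0:ℝ) < 2*L*R + 1 := by positivity
      calc (min (η'/2) ((η'/2)^2 * d₀ / (2*L*R + 1))) * (2*L*R+1)
          ≤ ((η'/2)^2 * d₀ / (2*L*R + 1)) * (2*L*R+1) :=
            mul_le_mul_of_nonneg_right h1 h2.le
      _ = (η'/2)^2 * d₀ := div_mul_cancel₀ _ h2.ne' 
    obtain ⟨ε, hεpos, hεd₀, hεη⟩ :
        ∃ ε : ℝ, 0 < ε ∧ ε ≤ d₀/2 ∧ 2*L*ε ≤ η * d₀ := by
      refine ⟨min (η * d₀ / (2*L)) (d₀/2), lt_min (by positivity) (by positivity),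
        min_le_right _ _, ?_⟩
      have h1 : min (η * d₀ / (2*L)) (d₀/2) ≤ η * d₀ / (2*L) := min_le_left _ _
      rw [le_div_iff₀ (by positivity : (0:ℝ) < 2*L)] at h1
      linarith
    obtain ⟨δm, hδm, hmod⟩ := proj_modulus hM hne hr hRτ hKcomp hKR ε hεpos
    obtain ⟨N, h, hNpos, hhpos, hhδm, h2hε, hNh⟩ :
        ∃ (N : ℕ) (h : ℝ), 0 < (N:ℝ) ∧ 0 < h ∧ h ≤ δm ∧ 2*h*ε ≤ d₀^2 ∧ (N:ℝ) * h = L := by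
      set hmax := min δm (d₀^2/(2*ε+1)) with hhmaxdef
      have hhmaxpos : 0 < hmax := lt_min hδm (by positivity)
      obtain ⟨N, hNgt⟩ := exists_nat_gt (L / hmax)
      have hNpos : 0 < (N:ℝ) := lt_trans (div_pos hLpos hhmaxpos) hNgt
      refine ⟨N, L / (N:ℝ), hNpos, div_pos hLpos hNpos, ?_, ?_, by field_simp⟩
      · have h1 := (div_lt_iff₀ hhmaxpos).mp hNgt
        have h2 : L / (N:ℝ) ≤ hmax := by
          rw [div_le_iff₀ hNpos]; nlinarith
        exact le_trans h2 (min_le_left _ _)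
      · have h1 := (div_lt_iff₀ hhmaxpos).mp hNgt
        have h2 : L / (N:ℝ) ≤ hmax := by
          rw [div_le_iff₀ hNpos]; nlinarith
        have h3 : L / (N:ℝ) ≤ d₀^2/(2*ε+1) := le_trans h2 (min_le_right _ _)
        rw [div_le_div_iff₀ hNpos (by positivity)] at h3
        have h4 : 0 < L / (N:ℝ) := div_pos hLpos hNpos
        have h5 : L * (2*ε+1) ≤ d₀^2 * (N:ℝ) := h3
        have h6 : 2*(L/(N:ℝ))*ε = (2*L*ε)/(N:ℝ) := by ring
        rw [h6, div_le_iff₀ hNpos]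
        nlinarith [hεpos.le, hLpos.le]
    obtain ⟨c, hcnn, hcd, hc2, hNc⟩ :
        ∃ c : ℝ, 0 ≤ c ∧ c * d₀ = 2*h*ε ∧ c^2 ≤ 2*h*ε ∧ (N:ℝ) * c ≤ η := by
      refine ⟨2*h*ε/d₀, by positivity, by field_simp, ?_, ?_⟩
      · have h1 : (2*h*ε/d₀)^2 = (2*h*ε) * (2*h*ε) / d₀^2 := by ring
        rw [h1, div_le_iff₀ (by positivity)]
        nlinarith [mul_le_mul_of_nonneg_left h2hε (show (0:ℝ) ≤ 2*h*ε by positivity)]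
      · rw [show (N:ℝ) * (2*h*ε/d₀) = 2*((N:ℝ)*h)*ε/d₀ by ring, hNh,
          div_le_iff₀ hd₀]
        nlinarith
    have hch : c ≤ h := by
      nlinarith [mul_le_mul_of_nonneg_left hεd₀ hhpos.le]
    set f := polygon hM hne h z₀ with hfdef
    have hf0 : f 0 = z₀ := rfl
    have hstep : ∀ k : ℕ, f (k+1) =
        f k + h • ((infDist (f k) M)⁻¹ • (f k - proj hM hne (f k))) := fun k => rfl
    clear_value f
    clear hfdef
    have inv : ∀ k : ℕ, k ≤ N → dist (f k) z₀ ≤ (k:ℝ) * h ∧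
        infDist (f k) M ≤ d₀ + (k:ℝ) * h ∧ d₀ + (k:ℝ) * (h - c) ≤ infDist (f k) M := by
      intro k
      induction k with
      | zero =>
        intro _
        rw [hf0]
        refine ⟨by simp, ?_, ?_⟩
        · rw [hreal]; push_cast; linarith
        · rw [hreal]; push_cast; linarith
      | succ k ih =>
        intro hk1
        have hkN : k ≤ N := Nat.le_of_succ_le hk1
        obtain ⟨ih1, ih2, ih3⟩ := ih hkN
        have hkR : (k:ℝ) ≤ (N:ℝ) := Nat.cast_le.mpr hkN
        have hk1R : (k:ℝ) + 1 ≤ (N:ℝ) := by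
          have := (Nat.cast_le (α := ℝ)).mpr hk1; push_cast at this; linarith
        have hkh_le : (k:ℝ) * h ≤ (N:ℝ) * h :=
          mul_le_mul_of_nonneg_right hkR hhpos.le
        have hk1h_le : ((k:ℝ)+1) * h ≤ (N:ℝ) * h :=
          mul_le_mul_of_nonneg_right hk1R hhpos.le
        have hkc_nn : 0 ≤ (k:ℝ) * (h - c) :=
          mul_nonneg (Nat.cast_nonneg k) (by linarith)
        have hd₀d : d₀ ≤ infDist (f k) M := by linarith
        have hdpos : 0 < infDist (f k) M := lt_of_lt_of_le hd₀ hd₀d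
        have hpkM : proj hM hne (f k) ∈ M := (proj_spec hM hne (f k)).1
        have hzpk : dist (f k) (proj hM hne (f k)) = infDist (f k) M :=
          (proj_spec hM hne (f k)).2
        set d := infDist (f k) M with hddefn
        set pk := proj hM hne (f k) with hpkdef
        set ν' := d⁻¹ • (f k - pk) with hν'def
        have hν'norm : ‖ν'‖ = 1 := by
          rw [hν'def, norm_smul, ← dist_eq_norm (f k) pk, hzpk]
          rw [norm_inv, Real.norm_eq_abs, abs_of_pos hdpos]
          field_simp
        have hwstep : f (k+1) = f k + h • ν' := hstep k
        have hdiststep : dist (f (k+1)) (f k) = h := by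
          rw [hwstep, dist_eq_norm]
          simp only [add_sub_cancel_left]
          rw [norm_smul, hν'norm, Real.norm_eq_abs, abs_of_pos hhpos, mul_one]
        have hzK : f k ∈ K := by
          constructor
          · rw [mem_closedBall]
            exact le_trans ih1 (by linarith)
          · simp only [mem_setOf_eq]
            rw [← hddefn]
            linarith
        have hwK : f (k+1) ∈ K := by
          constructor
          · rw [mem_closedBall]
            calc dist (f (k+1)) z₀ ≤ dist (f (k+1)) (f k) + dist (f k) z₀ :=
              dist_triangle _ _ _
            _ ≤ h + (k:ℝ)*h := by linarith
            _ ≤ L := by linarith [hk1h_le, hNh]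
          · simp only [mem_setOf_eq]
            calc infDist (f (k+1)) M ≤ infDist (f k) M + dist (f (k+1)) (f k) :=
              infDist_le_infDist_add_dist
            _ ≤ (d₀ + (k:ℝ)*h) + h := by rw [← hddefn]; linarith
            _ ≤ R := by linarith [hk1h_le, hNh]
        have hp'M : proj hM hne (f (k+1)) ∈ M := (proj_spec hM hne _).1
        have hwp' : dist (f (k+1)) (proj hM hne (f (k+1))) = infDist (f (k+1)) M :=
          (proj_spec hM hne _).2
        set p' := proj hM hne (f (k+1)) with hp'def
        have hclose : dist pk p' ≤ ε := by
          apply hmod (f k) hzK (f (k+1)) hwK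
          rw [dist_comm, hdiststep]
          exact hhδm
        have hip1 : ⟪f k - pk, ν'⟫ = d := by
          rw [hν'def, real_inner_smul_right, real_inner_self_eq_norm_sq]
          rw [← dist_eq_norm (f k) pk, hzpk]
          field_simp
        have hip2 : |⟪pk - p', ν'⟫| ≤ ε := by
          calc |⟪pk - p', ν'⟫| ≤ ‖pk - p'‖ * ‖ν'‖ := abs_real_inner_le_norm _ _
          _ = ‖pk - p'‖ := by rw [hν'norm, mul_one]
          _ = dist pk p' := (dist_eq_norm _ _).symm
          _ ≤ ε := hclose
        have hzp'lb : d ≤ ‖f k - p'‖ := by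
          rw [hddefn, ← dist_eq_norm]
          exact infDist_le_dist_of_mem hp'M
        have hkey : (d + h)^2 - 2*h*ε ≤ (infDist (f (k+1)) M)^2 := by
          have hexp : f (k+1) - p' = (f k - p') + h • ν' := by
            rw [hwstep]; abel
          have hnorm : (infDist (f (k+1)) M)^2 = ‖(f k - p') + h • ν'‖^2 := by
            rw [← hexp, ← dist_eq_norm, hwp']
          rw [hnorm, norm_add_sq_real]
          have hsm : ⟪f k - p', h • ν'⟫ = h * ⟪f k - p', ν'⟫ := real_inner_smul_right _ _ _
          have hsplit : ⟪f k - p', ν'⟫ = ⟪f k - pk, ν'⟫ + ⟪pk - p', ν'⟫ := by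
            rw [← inner_add_left]
            congr 1
            abel
          have hhn : ‖h • ν'‖^2 = h^2 := by
            rw [norm_smul, hν'norm, Real.norm_eq_abs, abs_of_pos hhpos, mul_one]
          rw [hsm, hsplit, hip1, hhn]
          exact arith_key hzp'lb hip2 hdpos hhpos
        have hlow : d + h - c ≤ infDist (f (k+1)) M := by
          have hsq : (d + h - c)^2 ≤ (infDist (f (k+1)) M)^2 :=
            le_trans (arith_low hcd hc2 hd₀d hcnn hhpos.le) hkey
          have hnn : 0 ≤ d + h - c := by linarith
          exact le_of_pow_le_pow_left₀ (by norm_num) infDist_nonneg hsq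
        refine ⟨?_, ?_, ?_⟩
        · calc dist (f (k+1)) z₀ ≤ dist (f (k+1)) (f k) + dist (f k) z₀ := dist_triangle _ _ _
          _ ≤ h + (k:ℝ)*h := by linarith
          _ = ((k+1 : ℕ):ℝ)*h := by push_cast; ring
        · calc infDist (f (k+1)) M ≤ infDist (f k) M + dist (f (k+1)) (f k) :=
            infDist_le_infDist_add_dist
          _ ≤ (d₀ + (k:ℝ)*h) + h := by rw [← hddefn]; linarith
          _ = d₀ + ((k+1:ℕ):ℝ)*h := by push_cast; ring
        · have heq2 : d₀ + ((k+1:ℕ):ℝ)*(h-c) = (d₀ + (k:ℝ)*(h-c)) + (h - c) := by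
            push_cast; ring
          rw [heq2]
          linarith
    obtain ⟨e1, e2, e3⟩ := inv N le_rfl
    have hfNlb : R - η ≤ infDist (f N) M := by
      have h1 : (N:ℝ)*(h-c) = L - (N:ℝ)*c := by rw [mul_sub, hNh]
      rw [h1] at e3
      have : R - η ≤ d₀ + (L - (N:ℝ)*c) := by rw [hRdL]; linarith
      linarith
    set w := f N - z₀ with hwdef
    have hwnorm : ‖w‖ ≤ L := by
      rw [hwdef, ← dist_eq_norm]
      exact le_trans e1 (le_of_eq hNh)
    have hfNp : f N - p = d₀ • ν + w := by
      rw [hwdef, hz₀]; abel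
    have hRη : 0 ≤ R - η := by linarith
    have hfNdist : R - η ≤ ‖d₀ • ν + w‖ := by
      rw [← hfNp, ← dist_eq_norm]
      exact le_trans hfNlb (infDist_le_dist_of_mem hp)
    have hwsq : ‖w‖^2 ≤ L^2 := pow_le_pow_left₀ (norm_nonneg _) hwnorm 2
    have hinner2 : d₀*L - R*η ≤ d₀ * ⟪ν, w⟫ := by
      have hsq : (R-η)^2 ≤ ‖d₀ • ν + w‖^2 := pow_le_pow_left₀ hRη hfNdist 2
      rw [norm_add_sq_real] at hsq
      have h1 : ‖d₀ • ν‖^2 = d₀^2 := by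
        rw [norm_smul, hν, Real.norm_eq_abs, abs_of_pos hd₀, mul_one]
      have h2 : ⟪d₀ • ν, w⟫ = d₀ * ⟪ν, w⟫ := real_inner_smul_left _ _ _
      rw [h1, h2] at hsq
      exact arith_inner hsq hwsq hRdL hηpos.le
    have hwL : ‖w - L • ν‖^2 * d₀ ≤ 2*L*(R*η) := by
      rw [norm_sub_sq_real]
      have h1 : ‖L • ν‖^2 = L^2 := by
        rw [norm_smul, hν, Real.norm_eq_abs, abs_of_pos hLpos, mul_one]
      have h2 : ⟪w, L • ν⟫ = L * ⟪ν, w⟫ := by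
        rw [real_inner_smul_right, real_inner_comm]
      rw [h1, h2]
      exact arith_wL hinner2 hwsq hLpos.le hd₀
    have hsqrt : ‖w - L • ν‖ ≤ η'/2 := by
      have hsq2 : ‖w - L • ν‖^2 ≤ (η'/2)^2 := arith_sq2 hwL hηle hd₀ hηpos.le
      exact le_of_pow_le_pow_left₀ (by norm_num) (by positivity) hsq2
    have htri : infDist (f N) M ≤ infDist (p + R • ν) M + dist (f N) (p + R • ν) :=
      infDist_le_infDist_add_dist
    have hdistfinal : dist (f N) (p + R • ν) = ‖w - L • ν‖ := by
      rw [dist_eq_norm]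
      congr 1
      rw [hwdef, hz₀, hLdef, sub_smul]
      abel
    rw [hdistfinal] at htri
    linarith
  rcases le_or_gt R (infDist (p + R • ν) M) with hfin | hfin
  · exact hfin
  · exfalso
    have h0 : 0 ≤ infDist (p + R • ν) M := infDist_nonneg
    have hη'pos : 0 < (R - infDist (p + R • ν) M)/2 := by linarith
    have hη'R : (R - infDist (p + R • ν) M)/2 ≤ R := by linarith
    have := main _ hη'pos hη'R
    linarith

lemma cone_ineq (hM : IsClosed M) (hne : M.Nonempty)
    (hr : ∀ z : EuclideanSpace ℝ (Fin D), infDist z M < τ →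
      ∃! p, p ∈ M ∧ dist z p = infDist z M)
    {b ν : EuclideanSpace ℝ (Fin D)} {d₀ : ℝ} (hb : b ∈ M) (hν : ‖ν‖ = 1)
    (hd₀ : 0 < d₀) (hreal : infDist (b + d₀ • ν) M = d₀)
    {R : ℝ} (hdR : d₀ ≤ R) (hRτ : R < τ) {m : EuclideanSpace ℝ (Fin D)} (hm : m ∈ M) :
    ⟪ν, m - b⟫ ≤ ‖m - b‖^2 / (2*R) := by
  have hRpos : 0 < R := lt_of_lt_of_le hd₀ hdR
  have h1 : R ≤ infDist (b + R • ν) M := propagation hM hne hr hb hν hd₀ hdR hRτ hreal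
  have h2 : R ≤ dist (b + R • ν) m := le_trans h1 (infDist_le_dist_of_mem hm)
  have h3 : dist (b + R • ν) m = ‖R • ν - (m - b)‖ := by
    rw [dist_eq_norm]
    congr 1
    abel
  have h4 : R^2 ≤ ‖R • ν - (m-b)‖^2 := by
    rw [← h3]
    exact pow_le_pow_left₀ hRpos.le h2 2
  rw [norm_sub_sq_real] at h4
  have h5 : ‖R • ν‖^2 = R^2 := by
    rw [norm_smul, hν, Real.norm_eq_abs, abs_of_pos hRpos, mul_one]
  rw [h5, real_inner_smul_left] at h4
  rw [le_div_iff₀ (by positivity)]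
  nlinarith

lemma init (hM : IsClosed M) (hne : M.Nonempty) {x v : EuclideanSpace ℝ (Fin D)}
    (hx : x ∈ M) (hv : ‖v‖ = 1)
    (hvT : ∀ w ∈ tangentConeAt ℝ M x, ⟪v, w⟫ = 0) :
    ∀ c > 0, ∀ tb > 0, ∃ t, 0 < t ∧ t ≤ tb ∧ dist (proj hM hne (x + t • v)) x ≤ c * t := by
  intro c hc tb htb
  by_contra hcon
  push_neg at hcon
  set t : ℕ → ℝ := fun n => tb / ((n:ℝ)+1) with htdef
  have htpos : ∀ n, 0 < t n := fun n => by positivity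
  have htle : ∀ n, t n ≤ tb := by
    intro n
    rw [htdef]
    rw [div_le_iff₀ (by positivity)]
    nlinarith [Nat.cast_nonneg (α := ℝ) n]
  set pf : ℕ → EuclideanSpace ℝ (Fin D) := fun n => proj hM hne (x + t n • v) with hpfdef
  set r : ℕ → ℝ := fun n => dist (pf n) x with hrdef
  have hrgt : ∀ n, c * t n < r n := fun n => hcon _ (htpos n) (htle n)
  have hrpos : ∀ n, 0 < r n := fun n => lt_trans (by positivity) (hrgt n)
  have hdistzx : ∀ n, dist (x + t n • v) x = t n := by
    intro n
    rw [dist_eq_norm, add_sub_cancel_left, norm_smul, hv, Real.norm_eq_abs,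
      abs_of_pos (htpos n), mul_one]
  have hdle : ∀ n, dist (x + t n • v) (pf n) ≤ t n := by
    intro n
    rw [(proj_spec hM hne _).2]
    calc infDist (x + t n • v) M ≤ dist (x + t n • v) x := infDist_le_dist_of_mem hx
    _ = t n := hdistzx n
  have hrle : ∀ n, r n ≤ 2 * t n := by
    intro n
    calc r n ≤ dist (pf n) (x + t n • v) + dist (x + t n • v) x := dist_triangle _ _ _
    _ ≤ t n + t n := by
        refine add_le_add ?_ (le_of_eq (hdistzx n))
        rw [dist_comm]
        exact hdle n
    _ = 2 * t n := by ring
  have hinner : ∀ n, c/2 ≤ ⟪v, (r n)⁻¹ • (pf n - x)⟫ := by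
    intro n
    have h1 : dist (x + t n • v) (pf n) ^2 ≤ (t n)^2 :=
      pow_le_pow_left₀ dist_nonneg (hdle n) 2
    have h2 : dist (x + t n • v) (pf n) = ‖t n • v - (pf n - x)‖ := by
      rw [dist_eq_norm]
      congr 1
      abel
    rw [h2, norm_sub_sq_real] at h1
    have h3 : ‖t n • v‖^2 = (t n)^2 := by
      rw [norm_smul, hv, Real.norm_eq_abs, abs_of_pos (htpos n), mul_one]
    have h4 : ⟪t n • v, pf n - x⟫ = t n * ⟪v, pf n - x⟫ := real_inner_smul_left _ _ _
    have h5 : ‖pf n - x‖ = r n := by rw [hrdef, ← dist_eq_norm]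
    rw [h3, h4, h5] at h1
    have h6 : (r n)^2 ≤ 2 * t n * ⟪v, pf n - x⟫ := by nlinarith
    rw [real_inner_smul_right]
    have h7 : c * t n ≤ r n := (hrgt n).le
    have h8 : (r n) / (2 * t n) ≤ (r n)⁻¹ * ⟪v, pf n - x⟫ := by
      have h9 : (r n)^2/(2*t n) ≤ ⟪v, pf n - x⟫ := by
        rw [div_le_iff₀ (by positivity)]
        nlinarith
      calc r n/(2*t n) = ((r n)⁻¹ * r n) * (r n/(2*t n)) := by
            rw [inv_mul_cancel₀ (hrpos n).ne', one_mul]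
      _ = (r n)⁻¹ * ((r n)^2/(2*t n)) := by ring
      _ ≤ (r n)⁻¹ * ⟪v, pf n - x⟫ :=
            mul_le_mul_of_nonneg_left h9 (inv_nonneg.mpr (hrpos n).le)
    refine le_trans ?_ h8
    rw [le_div_iff₀ (by positivity)]
    nlinarith [htpos n]
  set w : ℕ → EuclideanSpace ℝ (Fin D) := fun n => (r n)⁻¹ • (pf n - x) with hwdef
  have hwnorm : ∀ n, w n ∈ sphere (0 : EuclideanSpace ℝ (Fin D)) 1 := by
    intro n
    rw [mem_sphere_zero_iff_norm, hwdef]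
    simp only
    rw [norm_smul, norm_inv, Real.norm_eq_abs, abs_of_pos (hrpos n), ← dist_eq_norm]
    have heq : dist (pf n) x = r n := rfl
    rw [heq, inv_mul_cancel₀ (hrpos n).ne']
  obtain ⟨ws, hwsmem, φ, hφ, hwtend⟩ :=
    (isCompact_sphere (0 : EuclideanSpace ℝ (Fin D)) 1).tendsto_subseq hwnorm
  have hmem : ws ∈ tangentConeAt ℝ M x := by
    refine mem_tangentConeAt_iff_exists_seq_norm_tendsto_atTop.mpr
      ⟨fun n => (r (φ n))⁻¹, fun n => pf (φ n) - x, ?_, ?_, ?_⟩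
    swap
    · refine Eventually.of_forall fun n => ?_
      have : x + (pf (φ n) - x) = pf (φ n) := by abel
      rw [this]
      exact (proj_spec hM hne _).1
    · have hlow : ∀ n : ℕ, ((n:ℝ)+1)/(2*tb) ≤ ‖(r (φ n))⁻¹‖ := by
        intro n
        rw [Real.norm_eq_abs, abs_of_pos (inv_pos.mpr (hrpos (φ n)))]
        have h1 : r (φ n) ≤ 2 * (tb / ((φ n : ℝ)+1)) := hrle (φ n)
        have h2 : ((n:ℝ)+1) ≤ ((φ n : ℝ)+1) := by
          have h3 : (n:ℝ) ≤ (φ n : ℝ) := Nat.cast_le.mpr hφ.le_apply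
          linarith
        have h4 : r (φ n) ≤ 2 * tb / ((n:ℝ)+1) := by
          have h3 : 2 * (tb/((φ n:ℝ)+1)) = 2*tb/((φ n:ℝ)+1) := by ring
          rw [h3] at h1
          have h5 : 2*tb/((φ n:ℝ)+1) ≤ 2*tb/((n:ℝ)+1) := by
            rw [div_le_div_iff₀ (by positivity) (by positivity)]
            nlinarith [htb.le]
          linarith
        have h6 : ((n:ℝ)+1)/(2*tb) = (2*tb/((n:ℝ)+1))⁻¹ := by rw [inv_div]
        rw [h6]
        exact inv_anti₀ (hrpos (φ n)) h4
      refine tendsto_atTop_mono hlow ?_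
      apply Tendsto.atTop_div_const (by positivity)
      exact tendsto_atTop_add_const_right _ _ tendsto_natCast_atTop_atTop
    · exact hwtend
  have hz := hvT ws hmem
  have hge : c/2 ≤ ⟪v, ws⟫ := by
    have hlim : Tendsto (fun n => ⟪v, w (φ n)⟫) atTop (𝓝 ⟪v, ws⟫) :=
      tendsto_const_nhds.inner hwtend
    exact ge_of_tendsto hlim (Eventually.of_forall fun n => hinner (φ n))
  rw [hz] at hge
  linarith

set_option maxHeartbeats 1000000 in
lemma main_ineq (hM : IsClosed M) (hτ : 0 < τ)
    (hr : ∀ z : EuclideanSpace ℝ (Fin D), infDist z M < τ →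
      ∃! p, p ∈ M ∧ dist z p = infDist z M)
    {x y v : EuclideanSpace ℝ (Fin D)} (hx : x ∈ M) (hy : y ∈ M) (hxy : x ≠ y)
    (hv : ‖v‖ = 1) (hvT : ∀ w ∈ tangentConeAt ℝ M x, ⟪v, w⟫ = 0) :
    ⟪v, y - x⟫ ≤ ‖y - x‖^2 / (2*τ) := by
  have hne : M.Nonempty := ⟨x, hx⟩
  have H : ∀ R, 0 < R → R < τ → ⟪v, y - x⟫ ≤ ‖y - x‖^2/(2*R) := by
    intro R hR hRτ
    apply le_of_forall_pos_le_add
    intro ε hε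
    set Y := ‖y - x‖ with hYdef
    have hY0 : 0 ≤ Y := norm_nonneg _
    set C₀ := (2*Y+1)/(2*R) + 4*Y + 1 with hC₀def
    have hC₀pos : 0 < C₀ := by positivity
    obtain ⟨c, hcpos, hc2, hcC₀⟩ : ∃ c : ℝ, 0 < c ∧ c ≤ 1/2 ∧ c * C₀ ≤ ε := by
      refine ⟨min (1/2) (ε/C₀), lt_min one_half_pos (by positivity), min_le_left _ _, ?_⟩
      have h1 : min (1/2) (ε/C₀) ≤ ε/C₀ := min_le_right _ _
      calc min (1/2) (ε/C₀) * C₀ ≤ (ε/C₀) * C₀ := mul_le_mul_of_nonneg_right h1 hC₀pos.le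
      _ = ε := div_mul_cancel₀ _ hC₀pos.ne'
    have htbpos : 0 < min 1 R := lt_min one_pos hR
    obtain ⟨t, htpos, htle, hproj⟩ := init hM hne hx hv hvT c hcpos (min 1 R) htbpos
    have ht1 : t ≤ 1 := le_trans htle (min_le_left _ _)
    have htR : t ≤ R := le_trans htle (min_le_right _ _)
    set z := x + t • v with hzdef
    set b := proj hM hne z with hbdef
    set d := infDist z M with hddef
    set r := dist b x with hrdef
    have hbM : b ∈ M := (proj_spec hM hne z).1
    have hzb : dist z b = d := (proj_spec hM hne z).2
    have hdistzx : dist z x = t := by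
      rw [hzdef, dist_eq_norm, add_sub_cancel_left, norm_smul, hv, Real.norm_eq_abs,
        abs_of_pos htpos, mul_one]
    have hdt : d ≤ t := by
      rw [hddef, ← hdistzx]
      exact infDist_le_dist_of_mem hx
    have hrct : r ≤ c*t := hproj
    have hrt2 : r ≤ t/2 := by nlinarith
    have htd : t ≤ d + r := by
      have h1 : dist z x ≤ dist z b + dist b x := dist_triangle _ _ _
      rw [hdistzx, hzb] at h1
      exact h1
    have hdpos : 0 < d := by linarith
    set ν := d⁻¹ • (z - b) with hνdef
    have hνnorm : ‖ν‖ = 1 := by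
      rw [hνdef, norm_smul, norm_inv, Real.norm_eq_abs, abs_of_pos hdpos,
        ← dist_eq_norm z b, hzb, inv_mul_cancel₀ hdpos.ne']
    have hreal : infDist (b + d • ν) M = d := by
      have hback : b + d • ν = z := by
        rw [hνdef, smul_smul, mul_inv_cancel₀ hdpos.ne', one_smul]
        abel
      rw [hback, ← hddef]
    have hdR : d ≤ R := le_trans hdt htR
    have hcone : ⟪ν, y - b⟫ ≤ ‖y - b‖^2/(2*R) :=
      cone_ineq hM hne hr hbM hνnorm hdpos hreal hdR hRτ hy
    -- ‖v - ν‖ ≤ 4 c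
    have hvν : ‖v - ν‖ ≤ 4*c := by
      have h1 : d⁻¹ • (d • v - (z - b)) = v - ν := by
        rw [smul_sub d⁻¹ (d • v) (z - b), smul_smul, inv_mul_cancel₀ hdpos.ne', one_smul,
          hνdef]
      have h2 : d • v - (z - b) = (d - t) • v + (b - x) := by
        rw [hzdef, sub_smul]
        abel
      have h3 : ‖d • v - (z - b)‖ ≤ (t - d) + r := by
        rw [h2]
        refine le_trans (norm_add_le _ _) ?_
        have h4 : ‖(d - t) • v‖ = t - d := by
          rw [norm_smul, hv, mul_one, Real.norm_eq_abs, abs_of_nonpos (by linarith), neg_sub]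
        have h5 : ‖b - x‖ = r := by rw [hrdef, dist_eq_norm]
        rw [h4, h5]
      have h6 : ‖v - ν‖ ≤ d⁻¹ * ((t - d) + r) := by
        rw [← h1, norm_smul, norm_inv, Real.norm_eq_abs, abs_of_pos hdpos]
        exact mul_le_mul_of_nonneg_left h3 (by positivity)
      have h7 : d⁻¹ * ((t - d) + r) ≤ d⁻¹ * (2*r) :=
        mul_le_mul_of_nonneg_left (by linarith) (by positivity)
      have h8 : d⁻¹ * (2*r) ≤ 4*c := by
        rw [inv_mul_eq_div, div_le_iff₀ hdpos]
        nlinarith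
      linarith
    clear_value z b d r ν
    -- splitting
    have hsplit : ⟪v, y - x⟫ = ⟪v - ν, y - x⟫ + ⟪ν, y - b⟫ + ⟪ν, b - x⟫ := by
      have h2 : ⟪ν, y - b⟫ + ⟪ν, b - x⟫ = ⟪ν, y - x⟫ := by
        rw [← inner_add_right]
        congr 1
        abel
      rw [inner_sub_left]
      linarith
    have he1 : ⟪v - ν, y - x⟫ ≤ 4*c*Y := by
      calc ⟪v - ν, y - x⟫ ≤ ‖v - ν‖ * ‖y - x‖ := real_inner_le_norm _ _
      _ ≤ (4*c) * Y := mul_le_mul_of_nonneg_right hvν hY0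
      _ = 4*c*Y := by ring
    have he2 : ⟪ν, b - x⟫ ≤ c := by
      calc ⟪ν, b - x⟫ ≤ ‖ν‖ * ‖b - x‖ := real_inner_le_norm _ _
      _ = r := by rw [hνnorm, one_mul, hrdef, dist_eq_norm]
      _ ≤ c := by
        have h6 : c * t ≤ c * 1 := mul_le_mul_of_nonneg_left ht1 hcpos.le
        linarith
    have he3 : ‖y - b‖^2 ≤ Y^2 + (2*Y+1)*r := by
      have h1 : ‖y - b‖ ≤ Y + r := by
        calc ‖y - b‖ = ‖(y - x) + (x - b)‖ := by congr 1; abel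
        _ ≤ ‖y - x‖ + ‖x - b‖ := norm_add_le _ _
        _ = Y + r := by rw [hYdef, hrdef, dist_eq_norm, norm_sub_rev x b]
      have h2 : ‖y - b‖^2 ≤ (Y + r)^2 := pow_le_pow_left₀ (norm_nonneg _) h1 2
      have hr1 : r ≤ 1 := by nlinarith
      have hr0 : 0 ≤ r := by rw [hrdef]; exact dist_nonneg
      nlinarith
    have he4 : ⟪ν, y - b⟫ ≤ Y^2/(2*R) + (2*Y+1)*r/(2*R) := by
      refine le_trans hcone ?_
      rw [← add_div]
      gcongr
    have hrc : r ≤ c := by nlinarith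
    have htotal : ⟪v, y - x⟫ ≤ Y^2/(2*R) + c*C₀ := by
      rw [hsplit, hC₀def]
      have h9 : (2*Y+1)*r/(2*R) ≤ (2*Y+1)*c/(2*R) := by
        gcongr
      have h10 := he4
      have h11 : c * ((2*Y+1)/(2*R) + 4*Y + 1) = (2*Y+1)*c/(2*R) + 4*c*Y + c := by ring
      rw [h11]
      linarith
    have hfin : ⟪v, y - x⟫ ≤ Y^2/(2*R) + ε :=
      le_trans htotal (add_le_add_right hcC₀ (Y^2/(2*R)))
    rw [hYdef] at hfin
    exact hfin
  rcases le_or_gt ⟪v, y - x⟫ 0 with hA | hA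
  · refine le_trans hA ?_
    positivity
  · by_contra hcon
    push_neg at hcon
    have hYpos : 0 < ‖y - x‖ := by
      rw [norm_pos_iff, sub_ne_zero]
      exact fun h => hxy h.symm
    set A := ⟪v, y - x⟫ with hAdef
    have hR₀τ : ‖y - x‖^2/(2*A) < τ := by
      rw [div_lt_iff₀ (by positivity)]
      rw [div_lt_iff₀ (by positivity : (0:ℝ) < 2*τ)] at hcon
      nlinarith
    set R := (‖y - x‖^2/(2*A) + τ)/2 with hRdef
    have hR₀pos : 0 < ‖y - x‖^2/(2*A) := by positivity
    have hRpos : 0 < R := by rw [hRdef]; linarith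
    have hRτ : R < τ := by rw [hRdef]; linarith
    have hRgt : ‖y - x‖^2/(2*A) < R := by rw [hRdef]; linarith
    have h1 := H R hRpos hRτ
    have h2 : ‖y - x‖^2/(2*R) < A := by
      rw [div_lt_iff₀ (by positivity)]
      rw [div_lt_iff₀ (by positivity : (0:ℝ) < 2*A)] at hRgt
      nlinarith
    linarith

end Federer


open Federer in
/-- Federer's reach inequality: if M is a closed subset of ℝ^D with reach at least τ > 0
(every point at distance < τ from M has a unique nearest point in M), then for any two
distinct points x, y ∈ M, the distance from y to the affine tangent space x + T_x M
satisfies d(y, x + T_x M) ≤ ‖x − y‖² / (2τ). -/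
theorem dist_to_tangent_le_of_reach
    (D : ℕ) (M : Set (EuclideanSpace ℝ (Fin D))) (hM : IsClosed M)
    (τ : ℝ) (hτ : 0 < τ)
    (hreach : ∀ z : EuclideanSpace ℝ (Fin D), infDist z M < τ →
      ∃! y, y ∈ M ∧ dist z y = infDist z M)
    (x y : EuclideanSpace ℝ (Fin D)) (hx : x ∈ M) (hy : y ∈ M) (hxy : x ≠ y)
    (T : Submodule ℝ (EuclideanSpace ℝ (Fin D)))
    (hT : (T : Set (EuclideanSpace ℝ (Fin D))) = tangentConeAt ℝ M x) :
    infDist y ((fun v => x + v) '' (T : Set (EuclideanSpace ℝ (Fin D))))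
      ≤ ‖x - y‖ ^ 2 / (2 * τ) := by
  classical
  set w : EuclideanSpace ℝ (Fin D) := y - x with hwdef
  set n : EuclideanSpace ℝ (Fin D) := w - ↑(T.orthogonalProjection w) with hndef
  have hnmem : n ∈ Tᗮ := Submodule.sub_starProjection_mem_orthogonal (K := T) w
  have hmemimg : x + ↑(T.orthogonalProjection w) ∈
      (fun v => x + v) '' (T : Set (EuclideanSpace ℝ (Fin D))) :=
    Set.mem_image_of_mem _ (SetLike.coe_mem _)
  have hle : infDist y ((fun v => x + v) '' (T : Set (EuclideanSpace ℝ (Fin D)))) ≤ ‖n‖ := by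
    refine le_trans (infDist_le_dist_of_mem hmemimg) ?_
    have heq : y - (x + ↑(T.orthogonalProjection w)) = n := by
      rw [hndef, hwdef]
      abel
    rw [dist_eq_norm, heq]
  rcases eq_or_ne n 0 with h0 | h0
  · rw [h0] at hle
    simp only [norm_zero] at hle
    refine le_trans hle ?_
    positivity
  · have hnpos : 0 < ‖n‖ := norm_pos_iff.mpr h0
    set v : EuclideanSpace ℝ (Fin D) := ‖n‖⁻¹ • n with hvdef
    have hvnorm : ‖v‖ = 1 := by
      rw [hvdef, norm_smul, norm_inv, norm_norm, inv_mul_cancel₀ hnpos.ne']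
    have hvT : ∀ u ∈ tangentConeAt ℝ M x, ⟪v, u⟫ = 0 := by
      intro u hu
      have huT : u ∈ T := by
        rw [← SetLike.mem_coe, hT]
        exact hu
      have h1 : ⟪u, n⟫ = 0 := (Submodule.mem_orthogonal T n).mp hnmem u huT
      rw [hvdef, real_inner_smul_left, real_inner_comm, h1, mul_zero]
    have hmain := main_ineq hM hτ hreach hx hy hxy hvnorm hvT
    have hvw : ⟪v, y - x⟫ = ‖n‖ := by
      rw [← hwdef, hvdef, real_inner_smul_left]
      have hdecomp : w = n + ↑(T.orthogonalProjection w) := by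
        rw [hndef]
        abel
      have hP0 : ⟪n, ↑(T.orthogonalProjection w)⟫ = (0:ℝ) := by
        rw [real_inner_comm]
        exact (Submodule.mem_orthogonal T n).mp hnmem _
          (SetLike.coe_mem (T.orthogonalProjection w))
      calc ‖n‖⁻¹ * ⟪n, w⟫ = ‖n‖⁻¹ * (⟪n, n⟫ + ⟪n, ↑(T.orthogonalProjection w)⟫) := by
            rw [← inner_add_right, ← hdecomp]
      _ = ‖n‖⁻¹ * ‖n‖^2 := by rw [hP0, add_zero, real_inner_self_eq_norm_sq]
      _ = ‖n‖ := by
            rw [sq, ← mul_assoc, inv_mul_cancel₀ hnpos.ne', one_mul]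
    rw [hvw] at hmain
    refine le_trans hle (le_trans hmain ?_)
    rw [norm_sub_rev]
end

section
/- Let Λ and Λ̂ be symmetric n×n real matrices with eigenvalues λ₁ ≥ ⋯ ≥ λ_n and λ̂₁ ≥ ⋯ ≥ λ̂_n, and suppose λ_d > 0 and λ_{d+1} = 0 for some 1 ≤ d ≤ n. Let U, Û ∈ ℝ^{n×d} have orthonormal columns equal to eigenvectors of Λ and Λ̂ corresponding to their d largest eigenvalues. Then ‖UUᵀ − ÛÛᵀ‖_F ≤ (2√2 ‖Λ̂ − Λ‖_F)/λ_d. -/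
open Matrix

/-- Frobenius norm of a real matrix. -/
noncomputable def frobNorm {m n : ℕ} (A : Matrix (Fin m) (Fin n) ℝ) : ℝ :=
  Real.sqrt (∑ i, ∑ j, A i j ^ 2)


lemma sum_sq_eq_trace {n : ℕ} (A : Matrix (Fin n) (Fin n) ℝ) :
    ∑ i, ∑ j, A i j ^ 2 = Matrix.trace (A * Aᵀ) := by
  simp [Matrix.trace, Matrix.mul_apply, Matrix.diag, sq]

lemma genTrace {n : ℕ} (A B : Matrix (Fin n) (Fin n) ℝ) (v w : Fin n → ℝ) :
    Matrix.trace (A * Matrix.diagonal v * Aᵀ * (B * Matrix.diagonal w * Bᵀ))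
      = ∑ i, ∑ j, v i * w j * ((Aᵀ * B) i j) ^ 2 := by
  have h1 : A * Matrix.diagonal v * Aᵀ * (B * Matrix.diagonal w * Bᵀ)
      = A * (Matrix.diagonal v * Aᵀ * (B * Matrix.diagonal w * Bᵀ)) := by
    simp only [Matrix.mul_assoc]
  rw [h1, Matrix.trace_mul_comm]
  have h2 : Matrix.diagonal v * Aᵀ * (B * Matrix.diagonal w * Bᵀ) * A
      = Matrix.diagonal v * ((Aᵀ * B) * Matrix.diagonal w * (Aᵀ * B)ᵀ) := by
    simp only [Matrix.transpose_mul, Matrix.transpose_transpose, Matrix.mul_assoc]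
  rw [h2]
  rw [Matrix.trace]
  refine Finset.sum_congr rfl fun i _ => ?_
  rw [Matrix.diag_apply, Matrix.diagonal_mul, Matrix.mul_apply, Finset.mul_sum]
  refine Finset.sum_congr rfl fun j _ => ?_
  rw [Matrix.mul_diagonal, Matrix.transpose_apply]
  ring

lemma diag_double_sum {n : ℕ} (v w : Fin n → ℝ) :
    (∑ i, ∑ j, v i * w j * (((1 : Matrix (Fin n) (Fin n) ℝ)) i j) ^ 2) = ∑ i, v i * w i := by
  refine Finset.sum_congr rfl fun i _ => ?_
  rw [Finset.sum_eq_single i]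
  · simp [Matrix.one_apply]
  · intro j _ hj
    simp [Matrix.one_apply, Ne.symm hj]
  · simp

lemma trace_mul_symm_sum {n : ℕ} (M N : Matrix (Fin n) (Fin n) ℝ) (hN : Nᵀ = N) :
    Matrix.trace (M * N) = ∑ i, ∑ j, M i j * N i j := by
  rw [Matrix.trace]
  refine Finset.sum_congr rfl fun i _ => ?_
  rw [Matrix.diag_apply, Matrix.mul_apply]
  refine Finset.sum_congr rfl fun j _ => ?_
  have : N j i = N i j := by
    have := congrFun (congrFun hN i) j
    rw [Matrix.transpose_apply] at this
    exact this
  rw [this]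

lemma map_castLE {n d : ℕ} (h : d ≤ n) :
    (Finset.univ.map ⟨Fin.castLE h, Fin.castLE_injective h⟩ : Finset (Fin n))
      = Finset.univ.filter (fun j : Fin n => (j : ℕ) < d) := by
  ext j
  simp only [Finset.mem_map, Finset.mem_univ, true_and, Finset.mem_filter,
    Function.Embedding.coeFn_mk]
  constructor
  · rintro ⟨a, rfl⟩
    exact a.isLt
  · intro hj
    exact ⟨⟨j.val, hj⟩, Fin.ext rfl⟩

lemma sum_castLE {n d : ℕ} (h : d ≤ n) (f : Fin n → ℝ) :
    ∑ j : Fin d, f (Fin.castLE h j) = ∑ j : Fin n, if (j : ℕ) < d then f j else 0 := by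
  calc ∑ j : Fin d, f (Fin.castLE h j)
      = ∑ j ∈ Finset.univ.map ⟨Fin.castLE h, Fin.castLE_injective h⟩, f j := by
        rw [Finset.sum_map]; rfl
    _ = ∑ j : Fin n, if (j : ℕ) < d then f j else 0 := by
        rw [map_castLE, Finset.sum_filter]


set_option maxHeartbeats 2000000 in
/-- Davis–Kahan type bound: if Λ and Λ̂ are symmetric n×n matrices with eigenvalue
decompositions Λ = P diag(λ) Pᵀ, Λ̂ = P̂ diag(λ̂) P̂ᵀ (λ, λ̂ sorted in decreasing order),
λ_d > 0, λ_{d+1} = 0, and U (resp. Û) collects the first d columns of P (resp. P̂),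
then ‖UUᵀ − ÛÛᵀ‖_F ≤ 2√2 ‖Λ̂ − Λ‖_F / λ_d. -/
theorem davis_kahan_projection_bound
    (n d : ℕ) (hd : 1 ≤ d) (hdn : d < n)
    (Λ Λhat : Matrix (Fin n) (Fin n) ℝ)
    (lam lamhat : Fin n → ℝ)
    (hlam : ∀ i j : Fin n, i ≤ j → lam j ≤ lam i)
    (hlamhat : ∀ i j : Fin n, i ≤ j → lamhat j ≤ lamhat i)
    (P Phat : Matrix (Fin n) (Fin n) ℝ)
    (hP : Pᵀ * P = 1) (hPhat : Phatᵀ * Phat = 1)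
    (hΛ : Λ = P * Matrix.diagonal lam * Pᵀ)
    (hΛhat : Λhat = Phat * Matrix.diagonal lamhat * Phatᵀ)
    (hpos : 0 < lam ⟨d - 1, lt_trans (Nat.sub_lt hd Nat.one_pos) hdn⟩)
    (hzero : lam ⟨d, hdn⟩ = 0)
    (U Uhat : Matrix (Fin n) (Fin d) ℝ)
    (hU : ∀ (i : Fin n) (j : Fin d), U i j = P i (Fin.castLE hdn.le j))
    (hUhat : ∀ (i : Fin n) (j : Fin d), Uhat i j = Phat i (Fin.castLE hdn.le j)) :
    frobNorm (U * Uᵀ - Uhat * Uhatᵀ)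
      ≤ 2 * Real.sqrt 2 * frobNorm (Λhat - Λ)
          / lam ⟨d - 1, lt_trans (Nat.sub_lt hd Nat.one_pos) hdn⟩ := by
  have hdd : d - 1 < n := lt_trans (Nat.sub_lt hd Nat.one_pos) hdn
  set μ : ℝ := lam ⟨d - 1, lt_trans (Nat.sub_lt hd Nat.one_pos) hdn⟩ with hμdef
  set ν : ℝ := lamhat ⟨d - 1, hdd⟩ with hνdef
  -- orthogonality of W = Pᵀ Phat
  have hPPt : P * Pᵀ = 1 := mul_eq_one_comm.mp hP
  have hPhatPt : Phat * Phatᵀ = 1 := mul_eq_one_comm.mp hPhat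
  set W : Matrix (Fin n) (Fin n) ℝ := Pᵀ * Phat with hWdef
  have hWt : Phatᵀ * P = Wᵀ := by
    rw [hWdef, Matrix.transpose_mul, Matrix.transpose_transpose]
  have hWWt : W * Wᵀ = 1 := by
    rw [hWdef, Matrix.transpose_mul, Matrix.transpose_transpose]
    calc Pᵀ * Phat * (Phatᵀ * P) = Pᵀ * (Phat * Phatᵀ) * P := by
          simp only [Matrix.mul_assoc]
      _ = 1 := by rw [hPhatPt, Matrix.mul_one, hP]
  have hWtW : Wᵀ * W = 1 := by
    rw [hWdef, Matrix.transpose_mul, Matrix.transpose_transpose]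
    calc Phatᵀ * P * (Pᵀ * Phat) = Phatᵀ * (P * Pᵀ) * Phat := by
          simp only [Matrix.mul_assoc]
      _ = 1 := by rw [hPPt, Matrix.mul_one, hPhat]
  set a : Fin n → Fin n → ℝ := fun i j => (W i j) ^ 2 with hadef
  have ha : ∀ i j, 0 ≤ a i j := fun i j => sq_nonneg _
  have hrow : ∀ i, ∑ j, a i j = 1 := by
    intro i
    have h := congrFun (congrFun hWWt i) i
    rw [Matrix.mul_apply] at h
    simp only [Matrix.one_apply_eq] at h
    rw [← h]
    exact Finset.sum_congr rfl fun j _ => by rw [Matrix.transpose_apply]; ring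
  have hcol : ∀ j, ∑ i, a i j = 1 := by
    intro j
    have h := congrFun (congrFun hWtW j) j
    rw [Matrix.mul_apply] at h
    simp only [Matrix.one_apply_eq] at h
    rw [← h]
    exact Finset.sum_congr rfl fun i _ => by rw [Matrix.transpose_apply]; ring
  set g : Fin n → ℝ := fun i => if (i : ℕ) < d then 1 else 0 with hgdef
  have hgnn : ∀ i, 0 ≤ g i := by
    intro i; simp only [hgdef]; split <;> norm_num
  have hg1 : ∀ i, g i ≤ 1 := by
    intro i; simp only [hgdef]; split <;> norm_num
  have hgsq : ∀ i, g i * g i = g i := by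
    intro i; simp only [hgdef]; split <;> norm_num
  -- projection forms
  have hproj : ∀ (Q : Matrix (Fin n) (Fin n) ℝ) (V : Matrix (Fin n) (Fin d) ℝ),
      (∀ i j, V i j = Q i (Fin.castLE hdn.le j)) →
      V * Vᵀ = Q * Matrix.diagonal g * Qᵀ := by
    intro Q V hV
    ext i k
    rw [Matrix.mul_apply]
    have hL : ∑ j : Fin d, V i j * Vᵀ j k
        = ∑ j : Fin d, (fun j' : Fin n => Q i j' * Q k j') (Fin.castLE hdn.le j) := by
      refine Finset.sum_congr rfl fun j _ => ?_
      rw [Matrix.transpose_apply, hV, hV]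
    rw [hL, sum_castLE hdn.le (fun j' : Fin n => Q i j' * Q k j'), Matrix.mul_apply]
    refine Finset.sum_congr rfl fun j _ => ?_
    rw [Matrix.mul_diagonal, Matrix.transpose_apply]
    simp only [hgdef]
    by_cases hc : (j : ℕ) < d <;> simp [hc]
  have hPi : U * Uᵀ = P * Matrix.diagonal g * Pᵀ := hproj P U hU
  have hPih : Uhat * Uhatᵀ = Phat * Matrix.diagonal g * Phatᵀ := hproj Phat Uhat hUhat
  -- trace identities
  have tLP : Matrix.trace (Λ * (U * Uᵀ)) = ∑ i, lam i * g i := by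
    rw [hΛ, hPi, genTrace, hP, diag_double_sum]
  have tLhPh : Matrix.trace (Λhat * (Uhat * Uhatᵀ)) = ∑ i, lamhat i * g i := by
    rw [hΛhat, hPih, genTrace, hPhat, diag_double_sum]
  have tLPh : Matrix.trace (Λ * (Uhat * Uhatᵀ)) = ∑ i, ∑ j, lam i * g j * a i j := by
    rw [hΛ, hPih, genTrace]
  have tLhP : Matrix.trace (Λhat * (U * Uᵀ)) = ∑ i, ∑ j, lamhat j * g i * a i j := by
    rw [hΛhat, hPi, genTrace, hWt, Finset.sum_comm]
    refine Finset.sum_congr rfl fun i _ => Finset.sum_congr rfl fun j _ => ?_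
    rw [Matrix.transpose_apply]
  have tPP : Matrix.trace ((U * Uᵀ) * (U * Uᵀ)) = ∑ i, g i * g i := by
    rw [hPi, genTrace, hP, diag_double_sum]
  have tPhPh : Matrix.trace ((Uhat * Uhatᵀ) * (Uhat * Uhatᵀ)) = ∑ i, g i * g i := by
    rw [hPih, genTrace, hPhat, diag_double_sum]
  have tPPh : Matrix.trace ((U * Uᵀ) * (Uhat * Uhatᵀ)) = ∑ i, ∑ j, g i * g j * a i j := by
    rw [hPi, hPih, genTrace]
  have tPhP : Matrix.trace ((Uhat * Uhatᵀ) * (U * Uᵀ)) = ∑ i, ∑ j, g i * g j * a i j := by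
    rw [hPih, hPi, genTrace, hWt, Finset.sum_comm]
    refine Finset.sum_congr rfl fun i _ => Finset.sum_congr rfl fun j _ => ?_
    rw [Matrix.transpose_apply]; ring
  set S1 : ℝ := ∑ i, ∑ j, g i * g j * a i j with hS1def
  set d' : ℝ := ∑ i, g i * g i with hd'def
  -- X is the difference of projections
  set X : Matrix (Fin n) (Fin n) ℝ := Uhat * Uhatᵀ - U * Uᵀ with hXdef
  have hXsymm : Xᵀ = X := by
    rw [hXdef]
    simp only [Matrix.transpose_sub, Matrix.transpose_mul, Matrix.transpose_transpose]
  -- Frobenius² of X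
  have F2 : ∑ i, ∑ j, X i j ^ 2 = 2 * d' - 2 * S1 := by
    rw [sum_sq_eq_trace, hXsymm]
    rw [hXdef]
    rw [Matrix.sub_mul, Matrix.mul_sub, Matrix.mul_sub, Matrix.trace_sub, Matrix.trace_sub,
      Matrix.trace_sub, tPP, tPhPh, tPPh, tPhP]
    ring
  -- inner product trace
  have tEX : ∑ i, ∑ j, (Λhat - Λ) i j * X i j
      = (∑ i, lamhat i * g i) - (∑ i, ∑ j, lamhat j * g i * a i j)
        - (∑ i, ∑ j, lam i * g j * a i j) + (∑ i, lam i * g i) := by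
    rw [← trace_mul_symm_sum _ _ hXsymm, hXdef, Matrix.sub_mul, Matrix.mul_sub, Matrix.mul_sub,
      Matrix.trace_sub, Matrix.trace_sub, Matrix.trace_sub, tLhPh, tLhP, tLPh, tLP]
    ring
  -- Ky Fan inequality : ∑∑ lamhat j * g i * a i j ≤ ∑ lamhat i * g i
  have hKyFan : (∑ i, ∑ j, lamhat j * g i * a i j) ≤ ∑ i, lamhat i * g i := by
    have hq : ∀ j, (∑ i, g i * a i j) ≤ 1 := by
      intro j
      calc ∑ i, g i * a i j ≤ ∑ i, a i j :=
            Finset.sum_le_sum fun i _ => mul_le_of_le_one_left (ha i j) (hg1 i)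
        _ = 1 := hcol j
    have hqnn : ∀ j, 0 ≤ ∑ i, g i * a i j :=
      fun j => Finset.sum_nonneg fun i _ => mul_nonneg (hgnn i) (ha i j)
    have hsum_q : (∑ j, ∑ i, g i * a i j) = ∑ j, g j := by
      rw [Finset.sum_comm]
      calc ∑ i, ∑ j, g i * a i j = ∑ i, g i * ∑ j, a i j := by
            refine Finset.sum_congr rfl fun i _ => ?_; rw [Finset.mul_sum]
        _ = ∑ i, g i := by refine Finset.sum_congr rfl fun i _ => by rw [hrow i, mul_one]
    have hper : ∀ j, ν * (g j - ∑ i, g i * a i j) ≤ lamhat j * (g j - ∑ i, g i * a i j) := by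
      intro j
      by_cases hj : (j : ℕ) < d
      · have hgj : g j = 1 := by simp [hgdef, hj]
        have h1 : 0 ≤ g j - ∑ i, g i * a i j := by rw [hgj]; linarith [hq j]
        have h2 : ν ≤ lamhat j := by
          refine hlamhat j ⟨d - 1, hdd⟩ ?_
          simp only [Fin.le_def]
          omega
        exact mul_le_mul_of_nonneg_right h2 h1
      · have hgj : g j = 0 := by simp [hgdef, hj]
        have h1 : g j - (∑ i, g i * a i j) ≤ 0 := by rw [hgj]; linarith [hqnn j]
        have h2 : lamhat j ≤ ν := by
          refine hlamhat ⟨d - 1, hdd⟩ j ?_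
          simp only [Fin.le_def]
          omega
        exact mul_le_mul_of_nonpos_right h2 h1
    have hsum : (∑ j, ν * (g j - ∑ i, g i * a i j))
        ≤ ∑ j, lamhat j * (g j - ∑ i, g i * a i j) := Finset.sum_le_sum fun j _ => hper j
    have hzero2 : (∑ j, ν * (g j - ∑ i, g i * a i j)) = 0 := by
      rw [← Finset.mul_sum, Finset.sum_sub_distrib, hsum_q]; ring
    have hexp : (∑ j, lamhat j * (g j - ∑ i, g i * a i j))
        = (∑ j, lamhat j * g j) - ∑ j, lamhat j * (∑ i, g i * a i j) := by
      rw [← Finset.sum_sub_distrib]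
      exact Finset.sum_congr rfl fun j _ => by ring
    have hswap : (∑ i, ∑ j, lamhat j * g i * a i j)
        = ∑ j, lamhat j * (∑ i, g i * a i j) := by
      rw [Finset.sum_comm]
      refine Finset.sum_congr rfl fun j _ => ?_
      rw [Finset.mul_sum]
      exact Finset.sum_congr rfl fun i _ => by ring
    rw [hswap]
    rw [hzero2] at hsum
    rw [hexp] at hsum
    linarith
  -- Gap inequality : (∑∑ lam i * g j * a i j) - ∑ lam i * g i ≤ μ * (S1 - d')
  have hGap : (∑ i, ∑ j, lam i * g j * a i j) - (∑ i, lam i * g i) ≤ μ * (S1 - d') := by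
    have hb1 : ∀ i, (∑ j, g j * a i j) ≤ 1 := by
      intro i
      calc ∑ j, g j * a i j ≤ ∑ j, a i j :=
            Finset.sum_le_sum fun j _ => mul_le_of_le_one_left (ha i j) (hg1 j)
        _ = 1 := hrow i
    have hbnn : ∀ i, 0 ≤ ∑ j, g j * a i j :=
      fun i => Finset.sum_nonneg fun j _ => mul_nonneg (hgnn j) (ha i j)
    have hper : ∀ i, lam i * ((∑ j, g j * a i j) - g i)
        ≤ μ * (g i * ((∑ j, g j * a i j) - g i)) := by
      intro i
      by_cases hi : (i : ℕ) < d
      · have hgi : g i = 1 := by simp [hgdef, hi]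
        have h1 : (∑ j, g j * a i j) - g i ≤ 0 := by rw [hgi]; linarith [hb1 i]
        have h2 : μ ≤ lam i := by
          refine hlam i ⟨d - 1, hdd⟩ ?_
          simp only [Fin.le_def]
          omega
        calc lam i * ((∑ j, g j * a i j) - g i) ≤ μ * ((∑ j, g j * a i j) - g i) :=
              mul_le_mul_of_nonpos_right h2 h1
          _ = μ * (g i * ((∑ j, g j * a i j) - g i)) := by rw [hgi, one_mul]
      · have hgi : g i = 0 := by simp [hgdef, hi]
        have h1 : 0 ≤ (∑ j, g j * a i j) - g i := by rw [hgi]; linarith [hbnn i]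
        have h2 : lam i ≤ 0 := by
          rw [← hzero]
          refine hlam ⟨d, hdn⟩ i ?_
          simp only [Fin.le_def]
          omega
        have : lam i * ((∑ j, g j * a i j) - g i) ≤ 0 :=
          mul_nonpos_of_nonpos_of_nonneg h2 h1
        calc lam i * ((∑ j, g j * a i j) - g i) ≤ 0 := this
          _ = μ * (g i * ((∑ j, g j * a i j) - g i)) := by rw [hgi, zero_mul, mul_zero]
    have hsum : (∑ i, lam i * ((∑ j, g j * a i j) - g i))
        ≤ ∑ i, μ * (g i * ((∑ j, g j * a i j) - g i)) := Finset.sum_le_sum fun i _ => hper i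
    have hL : (∑ i, lam i * ((∑ j, g j * a i j) - g i))
        = (∑ i, ∑ j, lam i * g j * a i j) - ∑ i, lam i * g i := by
      rw [← Finset.sum_sub_distrib]
      refine Finset.sum_congr rfl fun i _ => ?_
      rw [mul_sub, Finset.mul_sum]
      congr 1
      exact Finset.sum_congr rfl fun j _ => by ring
    have hR : (∑ i, μ * (g i * ((∑ j, g j * a i j) - g i))) = μ * (S1 - d') := by
      rw [← Finset.mul_sum]
      congr 1
      rw [hS1def, hd'def, ← Finset.sum_sub_distrib]
      refine Finset.sum_congr rfl fun i _ => ?_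
      rw [mul_sub, Finset.mul_sum]
      congr 1
      exact Finset.sum_congr rfl fun j _ => by ring
    rw [hL, hR] at hsum
    exact hsum
  -- chain inequality
  have hchain : μ * (d' - S1) ≤ ∑ i, ∑ j, (Λhat - Λ) i j * X i j := by
    rw [tEX]; linarith [hKyFan, hGap]
  -- Cauchy–Schwarz
  have hCS : (∑ i, ∑ j, (Λhat - Λ) i j * X i j) ^ 2
      ≤ (∑ i, ∑ j, (Λhat - Λ) i j ^ 2) * (∑ i, ∑ j, X i j ^ 2) := by
    have h := Finset.sum_mul_sq_le_sq_mul_sq Finset.univ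
      (fun p : Fin n × Fin n => (Λhat - Λ) p.1 p.2) (fun p => X p.1 p.2)
    simpa [Fintype.sum_prod_type] using h
  -- norms
  have hE2nn : 0 ≤ ∑ i, ∑ j, (Λhat - Λ) i j ^ 2 :=
    Finset.sum_nonneg fun i _ => Finset.sum_nonneg fun j _ => sq_nonneg _
  have hX2nn : 0 ≤ ∑ i, ∑ j, X i j ^ 2 :=
    Finset.sum_nonneg fun i _ => Finset.sum_nonneg fun j _ => sq_nonneg _
  have hNE2 : frobNorm (Λhat - Λ) ^ 2 = ∑ i, ∑ j, (Λhat - Λ) i j ^ 2 :=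
    Real.sq_sqrt hE2nn
  have hNX2 : frobNorm X ^ 2 = ∑ i, ∑ j, X i j ^ 2 := Real.sq_sqrt hX2nn
  have hNEnn : 0 ≤ frobNorm (Λhat - Λ) := Real.sqrt_nonneg _
  have hNXnn : 0 ≤ frobNorm X := Real.sqrt_nonneg _
  have hgoalNorm : frobNorm (U * Uᵀ - Uhat * Uhatᵀ) = frobNorm X := by
    unfold frobNorm
    congr 1
    refine Finset.sum_congr rfl fun i _ => Finset.sum_congr rfl fun j _ => ?_
    rw [hXdef]
    simp only [Matrix.sub_apply]
    ring
  set NE : ℝ := frobNorm (Λhat - Λ) with hNEdef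
  set NX : ℝ := frobNorm X with hNXdef
  -- d' - S1 ≥ 0 and main quadratic inequality
  have hd'S1 : 2 * d' - 2 * S1 = NX ^ 2 := by rw [hNX2, F2]
  have hdS1nn : 0 ≤ d' - S1 := by linarith [hd'S1, sq_nonneg NX]
  have htEXnn : 0 ≤ ∑ i, ∑ j, (Λhat - Λ) i j * X i j :=
    le_trans (mul_nonneg hpos.le hdS1nn) hchain
  have htEXle : (∑ i, ∑ j, (Λhat - Λ) i j * X i j) ≤ NE * NX := by
    have h1 : (∑ i, ∑ j, (Λhat - Λ) i j * X i j) ^ 2 ≤ (NE * NX) ^ 2 := by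
      rw [mul_pow, hNE2, hNX2]; exact hCS
    calc (∑ i, ∑ j, (Λhat - Λ) i j * X i j)
        = Real.sqrt ((∑ i, ∑ j, (Λhat - Λ) i j * X i j) ^ 2) := (Real.sqrt_sq htEXnn).symm
      _ ≤ Real.sqrt ((NE * NX) ^ 2) := Real.sqrt_le_sqrt h1
      _ = NE * NX := Real.sqrt_sq (mul_nonneg hNEnn hNXnn)
  have hmain : μ * NX ^ 2 ≤ 2 * NE * NX := by
    have he : μ * NX ^ 2 = 2 * (μ * (d' - S1)) := by rw [← hd'S1]; ring
    rw [he]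
    linarith [hchain, htEXle]
  rw [hgoalNorm]
  have hsqrt2 : (1 : ℝ) ≤ Real.sqrt 2 := by
    rw [show (1 : ℝ) = Real.sqrt 1 by rw [Real.sqrt_one]]
    exact Real.sqrt_le_sqrt (by norm_num)
  by_cases hNX0 : NX = 0
  · rw [hNX0]
    apply div_nonneg _ hpos.le
    have : 0 ≤ Real.sqrt 2 := Real.sqrt_nonneg 2
    nlinarith
  · have hNXpos : 0 < NX := lt_of_le_of_ne hNXnn (Ne.symm hNX0)
    rw [le_div_iff₀ hpos]
    have h2NE : μ * NX ≤ 2 * NE := by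
      refine le_of_mul_le_mul_right ?_ hNXpos
      calc μ * NX * NX = μ * NX ^ 2 := by ring
        _ ≤ 2 * NE * NX := hmain
        _ = 2 * NE * NX := rfl
    have h4 : 0 ≤ NE * (Real.sqrt 2 - 1) := mul_nonneg hNEnn (sub_nonneg.mpr hsqrt2)
    nlinarith [h2NE, h4]
end

section
/- Fix r > 0, an integer β ≥ 2, and a point x_i ∈ ℝ^D. Define α̃_i(x) = (1 − ‖x − x_i‖₂²/r²)^β for ‖x − x_i‖₂ ≤ r and 0 otherwise. Then for any unit vectors u, v and any x with ‖x − x_i‖₂ ≤ r, |∂_v ∂_u α̃_i(x)| ≤ C(β)/r² · (α̃_i(x)^{(β−2)/β} · ‖x − x_i‖₂²/r² + α̃_i(x)^{(β−1)/β}), for an explicit constant C(β) depending only on β (for instance C(β) = 4β²). -/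
/-- The bump weight α̃_i(x) = (1 − ‖x − x_i‖²/r²)^β for ‖x − x_i‖ ≤ r, and 0 otherwise. -/
noncomputable def alphaTilde {D : ℕ} (r : ℝ) (β : ℕ) (xi : EuclideanSpace ℝ (Fin D))
    (x : EuclideanSpace ℝ (Fin D)) : ℝ :=
  if ‖x - xi‖ ≤ r then (1 - ‖x - xi‖ ^ 2 / r ^ 2) ^ β else 0

open Filter Asymptotics
open scoped Topology RealInnerProductSpace

section
variable {D : ℕ} {r : ℝ} {β : ℕ} {xi : EuclideanSpace ℝ (Fin D)}

lemma hasFDeriv_interior (hr : 0 < r) (y : EuclideanSpace ℝ (Fin D)) (hy : ‖y - xi‖ < r) :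
    HasFDerivAt (alphaTilde r β xi)
      ((-(2 * (β:ℝ) / r ^ 2) * (1 - ‖y - xi‖ ^ 2 / r ^ 2) ^ (β - 1)) • innerSL ℝ (y - xi)) y := by
  have hsub : HasFDerivAt (fun z : EuclideanSpace ℝ (Fin D) => z - xi)
      (ContinuousLinearMap.id ℝ _) y := (hasFDerivAt_id y).sub_const xi
  have hn := hsub.norm_sq
  have hg : HasFDerivAt (fun z : EuclideanSpace ℝ (Fin D) => 1 - ‖z - xi‖ ^ 2 * (r ^ 2)⁻¹)
      (-((r ^ 2)⁻¹ • (2 • (innerSL ℝ (y - xi)).comp (ContinuousLinearMap.id ℝ _)))) y :=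
    (hn.mul_const ((r ^ 2)⁻¹)).const_sub 1
  have hp := (hasDerivAt_pow β ((1 : ℝ) - ‖y - xi‖ ^ 2 * (r ^ 2)⁻¹)).comp_hasFDerivAt y hg
  have heq : alphaTilde r β xi =ᶠ[𝓝 y]
      (fun z => (1 - ‖z - xi‖ ^ 2 * (r ^ 2)⁻¹) ^ β) := by
    filter_upwards [Metric.isOpen_ball.mem_nhds (by simpa [mem_ball_iff_norm, dist_eq_norm] using hy :
      y ∈ Metric.ball xi r)] with z hz
    rw [alphaTilde, if_pos (le_of_lt (by simpa [mem_ball_iff_norm, dist_eq_norm] using hz)), div_eq_mul_inv]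
  have h2 := hp.congr_of_eventuallyEq heq
  refine h2.congr_fderiv ?_
  · ext w
    simp [ContinuousLinearMap.smul_apply, smul_smul, div_eq_mul_inv]
    ring


lemma alpha_eq_max (hr : 0 < r) (hβ : 1 ≤ β) (z : EuclideanSpace ℝ (Fin D)) :
    alphaTilde r β xi z = (max (1 - ‖z - xi‖ ^ 2 / r ^ 2) 0) ^ β := by
  rw [alphaTilde]
  split_ifs with h
  · have h0 : 0 ≤ 1 - ‖z - xi‖ ^ 2 / r ^ 2 := by
      have h1 : ‖z - xi‖ ^ 2 ≤ r ^ 2 := by nlinarith [norm_nonneg (z - xi)]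
      have : ‖z - xi‖ ^ 2 / r ^ 2 ≤ 1 := by
        rw [div_le_one (by positivity)]; exact h1
      linarith
    rw [max_eq_left h0]
  · push_neg at h
    have h0 : 1 - ‖z - xi‖ ^ 2 / r ^ 2 < 0 := by
      have h1 : r ^ 2 < ‖z - xi‖ ^ 2 := by nlinarith
      have : 1 < ‖z - xi‖ ^ 2 / r ^ 2 := by
        rw [lt_div_iff₀ (by positivity)]; nlinarith
      linarith
    rw [max_eq_right h0.le, zero_pow (by omega)]

lemma max_le_of_sphere (hr : 0 < r) {y : EuclideanSpace ℝ (Fin D)} (hy : ‖y - xi‖ = r)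
    (z : EuclideanSpace ℝ (Fin D)) :
    max (1 - ‖z - xi‖ ^ 2 / r ^ 2) 0 ≤ 2 * ‖z - y‖ / r := by
  rcases le_or_gt (1 - ‖z - xi‖ ^ 2 / r ^ 2) 0 with h | h
  · rw [max_eq_right h]; positivity
  · rw [max_eq_left h.le]
    have hz : ‖z - xi‖ < r := by
      have hc : ‖z - xi‖ ^ 2 / r ^ 2 * r ^ 2 = ‖z - xi‖ ^ 2 :=
        div_mul_cancel₀ _ (by positivity)
      have ha2 : ‖z - xi‖ ^ 2 < r ^ 2 := by nlinarith [mul_pos h (show (0:ℝ) < r ^ 2 by positivity)]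
      exact lt_of_pow_lt_pow_left₀ 2 hr.le ha2
    have htri : r - ‖z - xi‖ ≤ ‖z - y‖ := by
      have := norm_sub_norm_le (y - xi) (z - xi)
      have h2 : (y - xi) - (z - xi) = y - z := by abel
      rw [h2, hy] at this
      have := norm_sub_rev y z ▸ this
      linarith [this]
    have key : (r - ‖z - xi‖) * (r + ‖z - xi‖) ≤ ‖z - y‖ * (2 * r) := by
      nlinarith [norm_nonneg (z - y), norm_nonneg (z - xi)]
    calc 1 - ‖z - xi‖ ^ 2 / r ^ 2 = (r - ‖z - xi‖) * (r + ‖z - xi‖) / r ^ 2 := by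
          field_simp; ring
      _ ≤ ‖z - y‖ * (2 * r) / r ^ 2 := by gcongr
      _ = 2 * ‖z - y‖ / r := by field_simp

lemma alpha_nonneg (hr : 0 < r) (hβ : 1 ≤ β) (z : EuclideanSpace ℝ (Fin D)) :
    0 ≤ alphaTilde r β xi z := by
  rw [alpha_eq_max hr hβ]; positivity

lemma hasFDeriv_sphere (hr : 0 < r) (hβ : 2 ≤ β) {y : EuclideanSpace ℝ (Fin D)}
    (hy : ‖y - xi‖ = r) : HasFDerivAt (alphaTilde r β xi) (0 : EuclideanSpace ℝ (Fin D) →L[ℝ] ℝ) y := by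
  have hαy : alphaTilde r β xi y = 0 := by
    rw [alpha_eq_max hr (by omega), hy]
    have : (1 : ℝ) - r ^ 2 / r ^ 2 = 0 := by field_simp; ring
    rw [this, max_self, zero_pow (by omega)]
  rw [hasFDerivAt_iff_isLittleO_nhds_zero]
  rw [isLittleO_iff]
  intro c hc
  have hmem : ∀ᶠ h : EuclideanSpace ℝ (Fin D) in 𝓝 0,
      ‖h‖ < min (r / 2) (c * r ^ 2 / 4) := by
    apply Metric.eventually_nhds_iff.2
    exact ⟨min (r / 2) (c * r ^ 2 / 4), by positivity, fun h hh => by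
      simpa [dist_eq_norm] using hh⟩
  filter_upwards [hmem] with h hh
  have hh1 : ‖h‖ ≤ r / 2 := (lt_min_iff.mp hh).1.le
  have hh2 : ‖h‖ ≤ c * r ^ 2 / 4 := (lt_min_iff.mp hh).2.le
  rw [hαy]
  simp only [ContinuousLinearMap.zero_apply, sub_zero]
  have hbase : max (1 - ‖y + h - xi‖ ^ 2 / r ^ 2) 0 ≤ 2 * ‖h‖ / r := by
    have := max_le_of_sphere hr hy (y + h)
    simpa [add_sub_cancel_left, show y + h - y = h by abel] using this
  have hbase0 : (0:ℝ) ≤ max (1 - ‖y + h - xi‖ ^ 2 / r ^ 2) 0 := le_max_right _ _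
  have hαv : alphaTilde r β xi (y + h) ≤ (2 * ‖h‖ / r) ^ β := by
    rw [alpha_eq_max hr (by omega)]
    exact pow_le_pow_left₀ hbase0 hbase β
  have hsmall : (2 * ‖h‖ / r) ≤ 1 := by
    rw [div_le_one hr]; linarith
  have hpow2 : (2 * ‖h‖ / r) ^ β ≤ (2 * ‖h‖ / r) ^ 2 :=
    pow_le_pow_of_le_one (by positivity) hsmall hβ
  have : alphaTilde r β xi (y + h) ≤ c * ‖h‖ := by
    calc alphaTilde r β xi (y + h) ≤ (2 * ‖h‖ / r) ^ 2 := hαv.trans hpow2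
      _ = 4 * ‖h‖ * ‖h‖ / r ^ 2 := by field_simp; ring
      _ ≤ 4 * (c * r ^ 2 / 4) * ‖h‖ / r ^ 2 := by
          gcongr
      _ = c * ‖h‖ := by field_simp
  rw [Real.norm_eq_abs, abs_of_nonneg (alpha_nonneg hr (by omega) _)]
  simpa using this

lemma hasFDeriv_exterior (hr : 0 < r) {y : EuclideanSpace ℝ (Fin D)}
    (hy : r < ‖y - xi‖) : HasFDerivAt (alphaTilde r β xi) (0 : EuclideanSpace ℝ (Fin D) →L[ℝ] ℝ) y := by
  have heq : alphaTilde r β xi =ᶠ[𝓝 y] (fun _ => (0:ℝ)) := by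
    have hopen : IsOpen {z : EuclideanSpace ℝ (Fin D) | r < ‖z - xi‖} := by
      have : {z : EuclideanSpace ℝ (Fin D) | r < ‖z - xi‖} = (Metric.closedBall xi r)ᶜ := by
        ext z; simp [Metric.mem_closedBall, dist_eq_norm, not_le]
      rw [this]; exact Metric.isClosed_closedBall.isOpen_compl
    filter_upwards [hopen.mem_nhds hy] with z hz
    rw [alphaTilde, if_neg (not_le.mpr hz)]
  exact (hasFDerivAt_const (0:ℝ) y).congr_of_eventuallyEq heq

lemma fderiv_alpha_eq (hr : 0 < r) (hβ : 2 ≤ β) (y u : EuclideanSpace ℝ (Fin D)) :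
    fderiv ℝ (alphaTilde r β xi) y u
      = -(2 * (β:ℝ) / r ^ 2) * (max (1 - ‖y - xi‖ ^ 2 / r ^ 2) 0) ^ (β - 1) * ⟪y - xi, u⟫ := by
  rcases lt_trichotomy (‖y - xi‖) r with h | h | h
  · rw [(hasFDeriv_interior hr y h).fderiv]
    have hpos : 0 ≤ 1 - ‖y - xi‖ ^ 2 / r ^ 2 := by
      have : ‖y - xi‖ ^ 2 / r ^ 2 < 1 := by
        rw [div_lt_one (by positivity)]
        exact pow_lt_pow_left₀ h (norm_nonneg _) (by omega)
      linarith
    rw [max_eq_left hpos]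
    simp only [ContinuousLinearMap.smul_apply, innerSL_apply_apply, smul_eq_mul]
  · rw [(hasFDeriv_sphere hr hβ h).fderiv]
    have : (1:ℝ) - ‖y - xi‖ ^ 2 / r ^ 2 = 0 := by rw [h]; field_simp; ring
    rw [this, max_self, zero_pow (by omega)]
    simp
  · rw [(hasFDeriv_exterior hr h).fderiv]
    have : (1:ℝ) - ‖y - xi‖ ^ 2 / r ^ 2 < 0 := by
      have h2 : r ^ 2 < ‖y - xi‖ ^ 2 := by
        apply pow_lt_pow_left₀ h hr.le (by omega)
      have : 1 < ‖y - xi‖ ^ 2 / r ^ 2 := by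
        rw [lt_div_iff₀ (by positivity)]; linarith
      linarith
    rw [max_eq_right this.le, zero_pow (by omega)]
    simp

lemma abs_fderiv_apply_le_of_lip {D : ℕ} {h : EuclideanSpace ℝ (Fin D) → ℝ}
    {x v : EuclideanSpace ℝ (Fin D)} (hv : ‖v‖ = 1)
    {K δ : ℝ} (hK : 0 ≤ K) (hδ : 0 < δ)
    (H : ∀ z, ‖z - x‖ ≤ δ → |h z - h x| ≤ K * ‖z - x‖) :
    |fderiv ℝ h x v| ≤ K := by
  by_cases hd : DifferentiableAt ℝ h x
  · have hline : HasDerivAt (fun t : ℝ => x + t • v) v 0 := by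
      simpa using ((hasDerivAt_id (0 : ℝ)).smul_const v).const_add x
    have hcomp : HasDerivAt (fun t : ℝ => h (x + t • v)) (fderiv ℝ h x v) 0 := by
      have := hd.hasFDerivAt.comp_hasDerivAt_of_eq 0 hline (by simp)
      exact this
    rw [hasDerivAt_iff_tendsto_slope] at hcomp
    have habs : Tendsto (fun t => |slope (fun t : ℝ => h (x + t • v)) 0 t|)
        (𝓝[≠] (0:ℝ)) (𝓝 |fderiv ℝ h x v|) := hcomp.abs
    refine le_of_tendsto habs ?_
    have hev : ∀ᶠ t : ℝ in 𝓝 0, |t| ≤ δ := by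
      apply Metric.eventually_nhds_iff.2
      exact ⟨δ, hδ, fun t ht => by rw [Real.dist_eq, sub_zero] at ht; exact ht.le⟩
    filter_upwards [self_mem_nhdsWithin, eventually_nhdsWithin_of_eventually_nhds hev]
      with t ht htδ
    have ht0 : t ≠ 0 := ht
    have hnorm : ‖(x + t • v) - x‖ = |t| := by
      simp [norm_smul, hv, Real.norm_eq_abs]
    rw [slope_def_field]
    have := H (x + t • v) (by rw [hnorm]; exact htδ)
    rw [hnorm] at this
    simp only [show x + (0:ℝ) • v = x by simp] at this ⊢
    rw [div_eq_mul_inv, abs_mul, abs_inv, sub_zero]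
    calc |h (x + t • v) - h x| * |t|⁻¹ ≤ (K * |t|) * |t|⁻¹ := by
          gcongr
      _ = K := by field_simp
  · simp [fderiv_zero_of_not_differentiableAt hd, hK]


lemma rpow_helper {t : ℝ} (ht : 0 ≤ t) {β k : ℕ} (hk : k ≤ β) (hβ : 0 < β) :
    (t ^ β) ^ (((β:ℝ) - k)/β) = t ^ (β - k) := by
  have h1 : ((t ^ β : ℝ)) = t ^ ((β:ℝ)) := (Real.rpow_natCast t β).symm
  rw [h1, ← Real.rpow_natCast t (β - k), ← Real.rpow_mul ht]
  congr 1
  rw [Nat.cast_sub hk]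
  field_simp

set_option maxHeartbeats 1000000 in
/-- For r > 0, integer β ≥ 2, unit vectors u, v and any x with ‖x − x_i‖ ≤ r, the second
directional derivative of α̃_i satisfies
|∂_v ∂_u α̃_i(x)| ≤ (4β²/r²) (α̃_i(x)^{(β−2)/β} ‖x − x_i‖²/r² + α̃_i(x)^{(β−1)/β}). -/
theorem alphaTilde_second_derivative_bound
    (D : ℕ) (r : ℝ) (hr : 0 < r) (β : ℕ) (hβ : 2 ≤ β)
    (xi : EuclideanSpace ℝ (Fin D)) :
    ∀ (u v x : EuclideanSpace ℝ (Fin D)), ‖u‖ = 1 → ‖v‖ = 1 → ‖x - xi‖ ≤ r →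
      |fderiv ℝ (fun y => fderiv ℝ (alphaTilde r β xi) y u) x v|
        ≤ (4 * (β : ℝ) ^ 2) / r ^ 2
            * ((alphaTilde r β xi x) ^ (((β : ℝ) - 2) / β) * (‖x - xi‖ ^ 2 / r ^ 2)
                + (alphaTilde r β xi x) ^ (((β : ℝ) - 1) / β)) := by
  intro u v x hu hv hx
  rcases hx.lt_or_eq with hint | hb
  · -- interior case
    have Heq : (fun y => fderiv ℝ (alphaTilde r β xi) y u) =ᶠ[𝓝 x]
        (fun y => -(2 * (β:ℝ) / r ^ 2) *
          ((1 - ‖y - xi‖ ^ 2 * (r ^ 2)⁻¹) ^ (β - 1) * ⟪u, y - xi⟫)) := by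
      filter_upwards [Metric.isOpen_ball.mem_nhds
        (by simpa [mem_ball_iff_norm, dist_eq_norm] using hint : x ∈ Metric.ball xi r)] with z hz
      rw [fderiv_alpha_eq hr hβ z u]
      have hzr : ‖z - xi‖ < r := by simpa [mem_ball_iff_norm, dist_eq_norm] using hz
      have hpos : 0 ≤ 1 - ‖z - xi‖ ^ 2 / r ^ 2 := by
        have : ‖z - xi‖ ^ 2 / r ^ 2 < 1 := by
          rw [div_lt_one (by positivity)]
          exact pow_lt_pow_left₀ hzr (norm_nonneg _) (by omega)
        linarith
      rw [max_eq_left hpos, real_inner_comm, div_eq_mul_inv]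
      ring
    rw [Heq.fderiv_eq]
    -- compute the derivative of the explicit function
    have hsub : HasFDerivAt (fun z : EuclideanSpace ℝ (Fin D) => z - xi)
        (ContinuousLinearMap.id ℝ _) x := (hasFDerivAt_id x).sub_const xi
    have hn := hsub.norm_sq
    have hg : HasFDerivAt (fun z : EuclideanSpace ℝ (Fin D) => 1 - ‖z - xi‖ ^ 2 * (r ^ 2)⁻¹)
        (-((r ^ 2)⁻¹ • (2 • (innerSL ℝ (x - xi)).comp (ContinuousLinearMap.id ℝ _)))) x :=
      (hn.mul_const ((r ^ 2)⁻¹)).const_sub 1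
    have hpow := (hasDerivAt_pow (β - 1) ((1 : ℝ) - ‖x - xi‖ ^ 2 * (r ^ 2)⁻¹)).comp_hasFDerivAt x hg
    have hinner : HasFDerivAt (fun z : EuclideanSpace ℝ (Fin D) => (⟪u, z - xi⟫ : ℝ))
        ((innerSL ℝ u).comp (ContinuousLinearMap.id ℝ _)) x :=
      (innerSL ℝ u).hasFDerivAt.comp x hsub
    have hmul := hpow.mul hinner
    have hφ := hmul.const_mul (-(2 * (β:ℝ) / r ^ 2))
    simp only [Function.comp_def, Pi.mul_def] at hφ
    rw [hφ.fderiv]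
    simp only [ContinuousLinearMap.smul_apply, ContinuousLinearMap.add_apply,
      ContinuousLinearMap.comp_apply, ContinuousLinearMap.coe_id', id_eq,
      ContinuousLinearMap.neg_apply, innerSL_apply_apply, smul_eq_mul, nsmul_eq_mul,
      Nat.cast_ofNat]
    clear hφ hmul hpow hinner hg hn hsub Heq
    have h1β : 1 ≤ β := by omega
    have hn21 : β - 1 - 1 = β - 2 := by omega
    rw [hn21]
    push_cast [Nat.cast_sub h1β]
    have hG0 : (0:ℝ) ≤ 1 - ‖x - xi‖ ^ 2 * (r ^ 2)⁻¹ := by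
      have h1 : ‖x - xi‖ ^ 2 ≤ r ^ 2 := by nlinarith [norm_nonneg (x - xi)]
      have h2 : ‖x - xi‖ ^ 2 * (r ^ 2)⁻¹ ≤ 1 := by
        rw [← div_eq_mul_inv, div_le_one (by positivity)]; exact h1
      linarith
    set n := ‖x - xi‖ with hndef
    set G := 1 - n ^ 2 * (r ^ 2)⁻¹ with hGdef
    have hα : alphaTilde r β xi x = G ^ β := by
      rw [alphaTilde, if_pos hx, div_eq_mul_inv]
    have hrpow2 : alphaTilde r β xi x ^ (((β:ℝ) - 2) / β) = G ^ (β - 2) := by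
      rw [hα]
      have := rpow_helper hG0 (k := 2) hβ (by omega)
      simpa using this
    have hrpow1 : alphaTilde r β xi x ^ (((β:ℝ) - 1) / β) = G ^ (β - 1) := by
      rw [hα]
      have := rpow_helper hG0 (k := 1) h1β (by omega)
      simpa using this
    rw [hrpow2, hrpow1]
    set A := (⟪u, v⟫ : ℝ) with hA
    set B := (⟪u, x - xi⟫ : ℝ) with hB
    set C := (⟪x - xi, v⟫ : ℝ) with hC
    set P := G ^ (β - 1) with hP
    set Q := G ^ (β - 2) with hQ
    have hP0 : (0:ℝ) ≤ P := pow_nonneg hG0 _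
    have hQ0 : (0:ℝ) ≤ Q := pow_nonneg hG0 _
    have hn0 : (0:ℝ) ≤ n := norm_nonneg _
    have huv : |A| ≤ 1 := by
      have := abs_real_inner_le_norm u v; rw [hu, hv] at this; simpa using this
    have hux : |B| ≤ n := by
      have := abs_real_inner_le_norm u (x - xi); rw [hu] at this; simpa using this
    have hxv : |C| ≤ n := by
      have := abs_real_inner_le_norm (x - xi) v; rw [hv] at this; simpa using this
    have expand : -(2 * (β:ℝ) / r ^ 2) * (P * A + B * (((β:ℝ) - 1) * Q * -((r ^ 2)⁻¹ * (2 * C))))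
        = -(2 * (β:ℝ) / r ^ 2 * P * A)
          + (4 * (β:ℝ) * ((β:ℝ) - 1) * (r ^ 2)⁻¹ * (r ^ 2)⁻¹ * Q) * (B * C) := by
      ring
    have hβ1 : (0:ℝ) ≤ (β:ℝ) - 1 := by
      have : (1:ℝ) ≤ β := by exact_mod_cast h1β
      linarith
    have hc0 : (0:ℝ) ≤ 4 * (β:ℝ) * ((β:ℝ) - 1) * (r ^ 2)⁻¹ * (r ^ 2)⁻¹ * Q := by
      have : (0:ℝ) ≤ (β:ℝ) := by positivity
      have h4 : (0:ℝ) ≤ 4 * (β:ℝ) * ((β:ℝ) - 1) := by nlinarith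
      have h5 : (0:ℝ) ≤ (r ^ 2)⁻¹ := by positivity
      nlinarith [mul_nonneg (mul_nonneg (mul_nonneg h4 h5) h5) hQ0]
    have hcP : (0:ℝ) ≤ 2 * (β:ℝ) / r ^ 2 * P := by positivity
    have step1 : |-(2 * (β:ℝ) / r ^ 2) * (P * A + B * (((β:ℝ) - 1) * Q * -((r ^ 2)⁻¹ * (2 * C))))|
        ≤ 2 * (β:ℝ) / r ^ 2 * P + (4 * (β:ℝ) * ((β:ℝ) - 1) * (r ^ 2)⁻¹ * (r ^ 2)⁻¹ * Q) * (n * n) := by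
      rw [expand]
      calc |(-(2 * (β:ℝ) / r ^ 2 * P * A))
            + (4 * (β:ℝ) * ((β:ℝ) - 1) * (r ^ 2)⁻¹ * (r ^ 2)⁻¹ * Q) * (B * C)|
          ≤ |(-(2 * (β:ℝ) / r ^ 2 * P * A))|
            + |(4 * (β:ℝ) * ((β:ℝ) - 1) * (r ^ 2)⁻¹ * (r ^ 2)⁻¹ * Q) * (B * C)| := abs_add_le _ _
        _ ≤ 2 * (β:ℝ) / r ^ 2 * P
            + (4 * (β:ℝ) * ((β:ℝ) - 1) * (r ^ 2)⁻¹ * (r ^ 2)⁻¹ * Q) * (n * n) := by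
            have t1 : |(-(2 * (β:ℝ) / r ^ 2 * P * A))| ≤ 2 * (β:ℝ) / r ^ 2 * P := by
              rw [abs_neg, abs_mul, abs_of_nonneg hcP]
              nlinarith [abs_nonneg A]
            have t2 : |(4 * (β:ℝ) * ((β:ℝ) - 1) * (r ^ 2)⁻¹ * (r ^ 2)⁻¹ * Q) * (B * C)|
                ≤ (4 * (β:ℝ) * ((β:ℝ) - 1) * (r ^ 2)⁻¹ * (r ^ 2)⁻¹ * Q) * (n * n) := by
              rw [abs_mul, abs_of_nonneg hc0, abs_mul]
              have hBC : |B| * |C| ≤ n * n :=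
                mul_le_mul hux hxv (abs_nonneg _) hn0
              nlinarith [abs_nonneg B, abs_nonneg C]
            linarith
    refine step1.trans ?_
    have hβR : (2:ℝ) ≤ (β:ℝ) := by exact_mod_cast hβ
    have hs : (0:ℝ) < (r ^ 2)⁻¹ := by positivity
    have key1 : 2 * (β:ℝ) / r ^ 2 * P ≤ 4 * (β:ℝ) ^ 2 / r ^ 2 * P := by
      apply mul_le_mul_of_nonneg_right ?_ hP0
      rw [div_le_div_iff₀ (by positivity) (by positivity)]
      nlinarith [mul_nonneg (by nlinarith : (0:ℝ) ≤ 4 * (β:ℝ) ^ 2 - 2 * (β:ℝ)) (sq_nonneg r)]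
    have key2 : (4 * (β:ℝ) * ((β:ℝ) - 1) * (r ^ 2)⁻¹ * (r ^ 2)⁻¹ * Q) * (n * n)
        ≤ 4 * (β:ℝ) ^ 2 / r ^ 2 * (Q * (n ^ 2 / r ^ 2)) := by
      have hQn : (0:ℝ) ≤ (r ^ 2)⁻¹ * (r ^ 2)⁻¹ * Q * (n * n) := by
        nlinarith [mul_nonneg (mul_nonneg (mul_nonneg hs.le hs.le) hQ0) (mul_nonneg hn0 hn0)]
      have hcc : 4 * (β:ℝ) * ((β:ℝ) - 1) ≤ 4 * (β:ℝ) ^ 2 := by nlinarith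
      calc (4 * (β:ℝ) * ((β:ℝ) - 1) * (r ^ 2)⁻¹ * (r ^ 2)⁻¹ * Q) * (n * n)
          = (4 * (β:ℝ) * ((β:ℝ) - 1)) * ((r ^ 2)⁻¹ * (r ^ 2)⁻¹ * Q * (n * n)) := by ring
        _ ≤ (4 * (β:ℝ) ^ 2) * ((r ^ 2)⁻¹ * (r ^ 2)⁻¹ * Q * (n * n)) :=
            mul_le_mul_of_nonneg_right hcc hQn
        _ = 4 * (β:ℝ) ^ 2 / r ^ 2 * (Q * (n ^ 2 / r ^ 2)) := by
            simp only [div_eq_mul_inv]; ring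
    calc 2 * (β:ℝ) / r ^ 2 * P + (4 * (β:ℝ) * ((β:ℝ) - 1) * (r ^ 2)⁻¹ * (r ^ 2)⁻¹ * Q) * (n * n)
        ≤ 4 * (β:ℝ) ^ 2 / r ^ 2 * P + 4 * (β:ℝ) ^ 2 / r ^ 2 * (Q * (n ^ 2 / r ^ 2)) := by
          linarith
      _ = 4 * (β:ℝ) ^ 2 / r ^ 2 * (Q * (n ^ 2 / r ^ 2) + P) := by ring

  · -- boundary case : ‖x - xi‖ = r
    have hα0 : alphaTilde r β xi x = 0 := by
      rw [alpha_eq_max hr (by omega), hb]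
      have h0 : (1:ℝ) - r ^ 2 / r ^ 2 = 0 := by field_simp; ring
      rw [h0, max_self, zero_pow (by omega)]
    have hmax0 : max (1 - ‖x - xi‖ ^ 2 / r ^ 2) 0 = 0 := by
      rw [hb]
      have h0 : (1:ℝ) - r ^ 2 / r ^ 2 = 0 := by field_simp; ring
      rw [h0, max_self]
    have hhx : fderiv ℝ (alphaTilde r β xi) x u = 0 := by
      rw [fderiv_alpha_eq hr hβ, hmax0, zero_pow (by omega)]
      ring
    have hbound : ∀ z : EuclideanSpace ℝ (Fin D), ‖z - x‖ ≤ r →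
        |fderiv ℝ (alphaTilde r β xi) z u|
          ≤ 2 * (β:ℝ) / r ^ 2 * (2 * ‖z - x‖ / r) ^ (β - 1) * (2 * r) := by
      intro z hz
      rw [fderiv_alpha_eq hr hβ]
      have hmz : (0:ℝ) ≤ max (1 - ‖z - xi‖ ^ 2 / r ^ 2) 0 := le_max_right _ _
      have hmle : max (1 - ‖z - xi‖ ^ 2 / r ^ 2) 0 ≤ 2 * ‖z - x‖ / r :=
        max_le_of_sphere hr hb z
      have hinn : |⟪z - xi, u⟫| ≤ 2 * r := by
        have h1 := abs_real_inner_le_norm (z - xi) u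
        rw [hu, mul_one] at h1
        have h2 : ‖z - xi‖ ≤ 2 * r := by
          have h3 : z - xi = (z - x) + (x - xi) := by abel
          calc ‖z - xi‖ = ‖(z - x) + (x - xi)‖ := by rw [← h3]
            _ ≤ ‖z - x‖ + ‖x - xi‖ := norm_add_le _ _
            _ ≤ r + r := by rw [hb]; linarith
            _ = 2 * r := by ring
        linarith
      rw [abs_mul, abs_mul, abs_neg,
        abs_of_nonneg (by positivity : (0:ℝ) ≤ 2 * (β:ℝ) / r ^ 2), abs_pow,
        abs_of_nonneg hmz]
      have hp : (max (1 - ‖z - xi‖ ^ 2 / r ^ 2) 0) ^ (β - 1) ≤ (2 * ‖z - x‖ / r) ^ (β - 1) :=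
        pow_le_pow_left₀ hmz hmle _
      exact mul_le_mul (mul_le_mul_of_nonneg_left hp (by positivity)) hinn (abs_nonneg _)
        (by positivity)
    rcases eq_or_lt_of_le hβ with hβ2 | hβ3
    · -- β = 2
      subst hβ2
      refine le_trans (abs_fderiv_apply_le_of_lip hv (K := 16 / r ^ 2) (δ := r)
        (by positivity) hr ?_) ?_
      · intro z hz
        rw [hhx, sub_zero]
        refine (hbound z hz).trans ?_
        have : 2 * ((2:ℕ):ℝ) / r ^ 2 * (2 * ‖z - x‖ / r) ^ (2 - 1) * (2 * r)
            = 16 / r ^ 2 * ‖z - x‖ := by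
          simp only [pow_one, Nat.cast_ofNat]
          field_simp
          simp only [Nat.reduceSub, pow_one]
          rw [mul_div_assoc', div_eq_iff hr.ne']
          ring
        rw [this]
      · rw [hα0, hb]
        have e1 : (((2:ℕ):ℝ) - 2) / ((2:ℕ):ℝ) = 0 := by norm_num
        have e2 : (((2:ℕ):ℝ) - 1) / ((2:ℕ):ℝ) = 1 / 2 := by norm_num
        rw [e1, e2, Real.rpow_zero, Real.zero_rpow (by norm_num : (1:ℝ)/2 ≠ 0)]
        have e3 : r ^ 2 / r ^ 2 = 1 := div_self (by positivity)
        rw [e3]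
        norm_num
    · -- 3 ≤ β
      have hzero : HasFDerivAt (fun y => fderiv ℝ (alphaTilde r β xi) y u)
          (0 : EuclideanSpace ℝ (Fin D) →L[ℝ] ℝ) x := by
        rw [hasFDerivAt_iff_isLittleO_nhds_zero, isLittleO_iff]
        intro c hc
        have hmem : ∀ᶠ h : EuclideanSpace ℝ (Fin D) in 𝓝 0,
            ‖h‖ < min (r / 2) (c * r ^ 3 / (16 * β)) := by
          apply Metric.eventually_nhds_iff.2
          refine ⟨min (r / 2) (c * r ^ 3 / (16 * β)), by positivity, fun h hh => by
            simpa [dist_eq_norm] using hh⟩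
        filter_upwards [hmem] with h hh
        have hh1 : ‖h‖ ≤ r / 2 := (lt_min_iff.mp hh).1.le
        have hh2 : ‖h‖ ≤ c * r ^ 3 / (16 * β) := (lt_min_iff.mp hh).2.le
        have hz1 : ‖(x + h) - x‖ ≤ r := by
          have : (x + h) - x = h := by abel
          rw [this]; linarith
        have hb1 := hbound (x + h) hz1
        rw [show (x + h) - x = h by abel] at hb1
        have hsm : 2 * ‖h‖ / r ≤ 1 := by rw [div_le_one hr]; linarith
        have hps : (2 * ‖h‖ / r) ^ (β - 1) ≤ (2 * ‖h‖ / r) ^ 2 :=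
          pow_le_pow_of_le_one (by positivity) hsm (by omega)
        have hfin : |fderiv ℝ (alphaTilde r β xi) (x + h) u| ≤ c * ‖h‖ := by
          calc |fderiv ℝ (alphaTilde r β xi) (x + h) u|
              ≤ 2 * (β:ℝ) / r ^ 2 * (2 * ‖h‖ / r) ^ (β - 1) * (2 * r) := hb1
            _ ≤ 2 * (β:ℝ) / r ^ 2 * (2 * ‖h‖ / r) ^ 2 * (2 * r) := by
                apply mul_le_mul_of_nonneg_right ?_ (by positivity)
                exact mul_le_mul_of_nonneg_left hps (by positivity)
            _ = 16 * (β:ℝ) / r ^ 3 * (‖h‖ * ‖h‖) := by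
                field_simp
                ring
            _ ≤ 16 * (β:ℝ) / r ^ 3 * ((c * r ^ 3 / (16 * β)) * ‖h‖) := by
                apply mul_le_mul_of_nonneg_left ?_ (by positivity)
                exact mul_le_mul_of_nonneg_right hh2 (norm_nonneg _)
            _ = c * ‖h‖ := by
                have hβ0 : ((β:ℝ)) ≠ 0 := by positivity
                field_simp
        simpa [hhx, Real.norm_eq_abs] using hfin
      rw [hzero.fderiv]
      simp only [ContinuousLinearMap.zero_apply, abs_zero]
      have h1 : 0 ≤ alphaTilde r β xi x := alpha_nonneg hr (by omega) x
      apply mul_nonneg (by positivity)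
      exact add_nonneg (mul_nonneg (Real.rpow_nonneg h1 _) (by positivity))
        (Real.rpow_nonneg h1 _)

end
end

section
/- Let M ⊂ ℝ^D be a closed set with reach τ > 0, let z ∈ ℝ^D with δ := d(z, M) < τ, let z* = Π_M(z), and let η ∈ M satisfy ‖z − η‖₂ ≤ r, where δ ≤ r < τ. Decompose η − z* = η̄ + η̂ with η̄ ∈ T_{z*}M and η̂ orthogonal to T_{z*}M. Then ‖η̂‖₂ ≤ (r² − δ²)/(2(τ − δ)). -/
open Metric

section AuxReach

open Metric Filter Set
open scoped Topology RealInnerProductSpace Classical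

noncomputable section
set_option linter.unusedSectionVars false

variable {E : Type*} [NormedAddCommGroup E] [InnerProductSpace ℝ E] [FiniteDimensional ℝ E]

/-- nearest point projection (junk value if no nearest point exists) -/
noncomputable def projM (M : Set E) (w : E) : E :=
  if h : ∃ y ∈ M, infDist w M = dist w y then h.choose else w

lemma projM_spec {M : Set E} (hM : IsClosed M) (hne : M.Nonempty) (w : E) :
    projM M w ∈ M ∧ infDist w M = dist w (projM M w) := by
  have h : ∃ y ∈ M, infDist w M = dist w y := hM.exists_infDist_eq_dist hne w
  rw [projM, dif_pos h]
  exact ⟨h.choose_spec.1, h.choose_spec.2⟩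

lemma projM_eq {M : Set E} (hM : IsClosed M) (hne : M.Nonempty) {τ : ℝ}
    (hreach : ∀ w : E, infDist w M < τ → ∃! y, y ∈ M ∧ dist w y = infDist w M)
    {w y : E} (hw : infDist w M < τ) (hy : y ∈ M) (hd : dist w y = infDist w M) :
    y = projM M w :=
  (hreach w hw).unique ⟨hy, hd⟩ ⟨(projM_spec hM hne w).1, (projM_spec hM hne w).2.symm⟩

lemma projM_tendsto {M : Set E} (hM : IsClosed M) (hne : M.Nonempty) {τ : ℝ}
    (hreach : ∀ w : E, infDist w M < τ → ∃! y, y ∈ M ∧ dist w y = infDist w M)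
    {w : E} (hw : infDist w M < τ) {u : ℕ → E} (hu : Tendsto u atTop (𝓝 w)) :
    Tendsto (fun n => projM M (u n)) atTop (𝓝 (projM M w)) := by
  apply tendsto_of_subseq_tendsto
  intro ns hns
  -- boundedness of the projected subsequence
  have hg : Tendsto (fun k => infDist (u (ns k)) M + dist (u (ns k)) w) atTop
      (𝓝 (infDist w M + 0)) := by
    exact Tendsto.add (((continuous_infDist_pt M).tendsto w).comp (hu.comp hns))
      ((tendsto_iff_dist_tendsto_zero.mp (hu.comp hns)))
  obtain ⟨C, hC⟩ := hg.bddAbove_range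
  have hball : ∀ k, projM M (u (ns k)) ∈ closedBall w C := by
    intro k
    have h1 : dist (projM M (u (ns k))) w ≤
        infDist (u (ns k)) M + dist (u (ns k)) w := by
      have := (projM_spec hM hne (u (ns k))).2
      calc dist (projM M (u (ns k))) w ≤
          dist (projM M (u (ns k))) (u (ns k)) + dist (u (ns k)) w := dist_triangle _ _ _
        _ = infDist (u (ns k)) M + dist (u (ns k)) w := by rw [dist_comm, ← this]
    exact mem_closedBall.mpr (h1.trans (hC ⟨k, rfl⟩))
  obtain ⟨a, _, ms, hms, hlim⟩ :=
    tendsto_subseq_of_bounded (isBounded_closedBall (x := w) (r := C)) hball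
  refine ⟨ms, ?_⟩
  have haM : a ∈ M := by
    refine hM.mem_of_tendsto hlim (Eventually.of_forall fun k => ?_)
    show projM M (u (ns (ms k))) ∈ M
    exact (projM_spec hM hne (u (ns (ms k)))).1
  have hda : dist w a = infDist w M := by
    have h1 : Tendsto (fun k => dist (u (ns (ms k))) (projM M (u (ns (ms k))))) atTop
        (𝓝 (dist w a)) := Tendsto.dist ((hu.comp hns).comp hms.tendsto_atTop) hlim
    have h2 : Tendsto (fun k => dist (u (ns (ms k))) (projM M (u (ns (ms k))))) atTop
        (𝓝 (infDist w M)) := by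
      have : (fun k => dist (u (ns (ms k))) (projM M (u (ns (ms k)))))
          = fun k => infDist (u (ns (ms k))) M := by
        funext k; exact ((projM_spec hM hne _).2).symm
      rw [this]
      exact ((continuous_infDist_pt M).tendsto w).comp ((hu.comp hns).comp hms.tendsto_atTop)
    exact tendsto_nhds_unique h1 h2
  rwa [projM_eq hM hne hreach hw haM hda] at hlim

/-- quadratic norm expansion bound -/
lemma norm_sub_smul_le {A w : E} (hA : A ≠ 0) (hw : ‖w‖ = 1) (c : ℝ) :
    ‖A - c • w‖ ≤ ‖A‖ - c * (⟪A, w⟫ / ‖A‖) + c ^ 2 / (2 * ‖A‖) := by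
  have ha : (0:ℝ) < ‖A‖ := norm_pos_iff.mpr hA
  have hb2 : ‖A - c • w‖ ^ 2 = ‖A‖ ^ 2 - 2 * (c * ⟪A, w⟫) + c ^ 2 := by
    rw [norm_sub_sq_real, real_inner_smul_right, norm_smul]
    simp [hw, mul_pow]
  have hbnn : (0:ℝ) ≤ ‖A - c • w‖ := norm_nonneg _
  have key : 2 * ‖A‖ * ‖A - c • w‖ ≤ 2 * ‖A‖ ^ 2 - 2 * (c * ⟪A, w⟫) + c ^ 2 := by
    nlinarith [sq_nonneg (‖A‖ - ‖A - c • w‖)]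
  rw [show ‖A‖ - c * (⟪A, w⟫ / ‖A‖) + c ^ 2 / (2 * ‖A‖)
      = (2 * ‖A‖ ^ 2 - 2 * (c * ⟪A, w⟫) + c ^ 2) / (2 * ‖A‖) by field_simp,
    le_div_iff₀ (by positivity)]
  linarith [key]

/-- unit "gradient" direction field of the distance function -/
noncomputable def dirX (M : Set E) (w : E) : E :=
  (infDist w M)⁻¹ • (w - projM M w)

lemma dist_projM {M : Set E} (hM : IsClosed M) (hne : M.Nonempty) (w : E) :
    ‖w - projM M w‖ = infDist w M := by
  rw [← dist_eq_norm, ← (projM_spec hM hne w).2]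

lemma norm_dirX {M : Set E} (hM : IsClosed M) (hne : M.Nonempty) {w : E}
    (hw : 0 < infDist w M) : ‖dirX M w‖ = 1 := by
  rw [dirX, norm_smul, dist_projM hM hne, norm_inv, Real.norm_eq_abs,
    abs_of_pos hw, inv_mul_cancel₀ hw.ne']

lemma dirX_continuousOn {M : Set E} (hM : IsClosed M) (hne : M.Nonempty) {τ : ℝ}
    (hreach : ∀ w : E, infDist w M < τ → ∃! y, y ∈ M ∧ dist w y = infDist w M) :
    ContinuousOn (dirX M) {w : E | 0 < infDist w M ∧ infDist w M < τ} := by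
  intro w hw
  apply ContinuousAt.continuousWithinAt
  have hproj : ContinuousAt (projM M) w := by
    rw [ContinuousAt, tendsto_iff_seq_tendsto]
    intro u hu
    exact projM_tendsto hM hne hreach hw.2 hu
  exact (((continuous_infDist_pt M).continuousAt.inv₀ hw.1.ne').smul
    (continuousAt_id.sub hproj))

/-- the key one-step inequality -/
lemma atomic_step {M : Set E} (hM : IsClosed M) (hne : M.Nonempty) {x w₀ : E}
    (hw : ‖w₀‖ = 1) {h : ℝ} (hd' : 0 < infDist (x + h • w₀) M) :
    infDist x M ≤ infDist (x + h • w₀) M - h * ⟪dirX M (x + h • w₀), w₀⟫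
      + h ^ 2 / (2 * infDist (x + h • w₀) M) := by
  set x' := x + h • w₀ with hx'
  set A := x' - projM M x' with hA
  have hAn : ‖A‖ = infDist x' M := dist_projM hM hne x'
  have hAne : A ≠ 0 := by
    intro h0
    rw [h0] at hAn
    simp at hAn
    exact hd'.ne' hAn.symm
  have h1 : infDist x M ≤ ‖A - h • w₀‖ := by
    have : x = x' - h • w₀ := by rw [hx']; abel
    rw [this]
    have h2 : x' - h • w₀ - projM M x' = A - h • w₀ := by rw [hA]; abel
    calc infDist (x' - h • w₀) M ≤ dist (x' - h • w₀) (projM M x') :=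
          infDist_le_dist_of_mem (projM_spec hM hne x').1
      _ = ‖A - h • w₀‖ := by rw [dist_eq_norm, h2]
  have h3 : ⟪dirX M x', w₀⟫ = ⟪A, w₀⟫ / ‖A‖ := by
    rw [dirX, ← hA, ← hAn, real_inner_smul_left, div_eq_inv_mul]
  calc infDist x M ≤ ‖A - h • w₀‖ := h1
    _ ≤ ‖A‖ - h * (⟪A, w₀⟫ / ‖A‖) + h ^ 2 / (2 * ‖A‖) := norm_sub_smul_le hAne hw h
    _ = infDist x' M - h * ⟪dirX M x', w₀⟫ + h ^ 2 / (2 * infDist x' M) := by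
        rw [h3, hAn]

set_option maxHeartbeats 2000000 in
/-- Federer-type extension lemma: realized normals extend to any length `S < τ`. -/
lemma ext_lemma {M : Set E} (hM : IsClosed M) (hne : M.Nonempty) {τ : ℝ}
    (hreach : ∀ w : E, infDist w M < τ → ∃! y, y ∈ M ∧ dist w y = infDist w M)
    {x₀ : E} {S : ℝ} (hd0 : 0 < infDist x₀ M) (hdS : infDist x₀ M ≤ S) (hSτ : S < τ) :
    infDist (projM M x₀ + (S / infDist x₀ M) • (x₀ - projM M x₀)) M = S := by
  set d₀ := infDist x₀ M with hd₀def
  set p := projM M x₀ with hpdef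
  rcases eq_or_lt_of_le hdS with hcase | hH
  · -- trivial case S = d₀
    rw [← hcase, div_self hd0.ne', one_smul]
    have h9 : p + (x₀ - p) = x₀ := by abel
    rw [h9]
  -- main case : H := S - d₀ > 0
  set H := S - d₀ with hHdef
  clear_value H
  have hHpos : 0 < H := by rw [hHdef]; linarith
  have hSpos : 0 < S := lt_trans hd0 hH
  have hτpos : 0 < τ := lt_trans hSpos hSτ
  -- Step 1 : approximate escape
  have step1 : ∀ ε' : ℝ, 0 < ε' → ∃ v ∈ closedBall x₀ H, S - ε' ≤ infDist v M := by
    intro ε' hε'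
    -- the compact region
    set K := closedBall x₀ (H + 1) ∩
      {w : E | d₀ / 2 ≤ infDist w M ∧ infDist w M ≤ (S + τ) / 2} with hKdef
    have hKc : IsCompact K := by
      apply (isCompact_closedBall x₀ (H + 1)).inter_right
      exact (isClosed_le continuous_const (continuous_infDist_pt M)).inter
        (isClosed_le (continuous_infDist_pt M) continuous_const)
    have hKO : K ⊆ {w : E | 0 < infDist w M ∧ infDist w M < τ} := by
      rintro w ⟨-, hw1, hw2⟩
      exact ⟨lt_of_lt_of_le (by linarith) hw1, lt_of_le_of_lt hw2 (by linarith)⟩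
    have hUC := hKc.uniformContinuousOn_of_continuous
      ((dirX_continuousOn hM hne hreach).mono hKO)
    rw [Metric.uniformContinuousOn_iff] at hUC
    set ε := min 1 (ε' / (H + 1)) with hεdef
    have hεpos : 0 < ε := lt_min one_pos (by positivity)
    have hε1 : ε ≤ 1 := min_le_left _ _
    have hε2 : ε ≤ ε' / (H + 1) := min_le_right _ _
    obtain ⟨δ, hδpos, hδ⟩ := hUC ε hεpos
    set c := min δ (min (d₀ / 2) (d₀ * ε' / (2 * (H + 1)))) with hcdef
    have hcpos : 0 < c := lt_min hδpos (lt_min (by positivity) (by positivity))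
    obtain ⟨N, hN⟩ := exists_nat_gt (H / c)
    have hNpos : 0 < (N : ℝ) := lt_trans (by positivity) hN
    set h := H / N with hhdef
    have hhpos : 0 < h := by positivity
    have hhc : h < c := by
      rw [hhdef, div_lt_iff₀ hNpos]
      calc H = (H / c) * c := by field_simp
        _ < N * c := by
          apply mul_lt_mul_of_pos_right hN hcpos
        _ = c * N := by ring
    have hNh : (N : ℝ) * h = H := by
      rw [hhdef]; field_simp
    have hhδ : h < δ := lt_of_lt_of_le hhc (min_le_left _ _)
    have hhd₀ : h ≤ d₀ / 2 := le_of_lt (lt_of_lt_of_le hhc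
      (le_trans (min_le_right _ _) (min_le_left _ _)))
    have hhε' : h ≤ d₀ * ε' / (2 * (H + 1)) := le_of_lt (lt_of_lt_of_le hhc
      (le_trans (min_le_right _ _) (min_le_right _ _)))
    clear_value ε c h
    set γ := h * (1 - ε ^ 2 / 2) - h ^ 2 / d₀ with hγdef
    clear_value γ
    have hγ0 : 0 ≤ γ := by
      rw [hγdef]
      have h1 : ε ^ 2 ≤ 1 := by nlinarith
      have h2 : h ^ 2 / d₀ ≤ h / 2 := by
        rw [div_le_iff₀ hd0]
        nlinarith
      nlinarith
    -- the main induction (existential form)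
    have ind : ∀ k : ℕ, k ≤ N → ∃ w : E, dist w x₀ ≤ k * h ∧
        d₀ + k * γ ≤ infDist w M ∧ infDist w M ≤ d₀ + k * h := by
      intro k
      induction k with
      | zero => intro _; exact ⟨x₀, by simp [hd₀def]⟩
      | succ k ih =>
        intro hk1
        have hkN : k ≤ N := le_of_lt (Nat.lt_of_succ_le hk1)
        obtain ⟨w, ih1, ih2, ih3⟩ := ih hkN
        have hkh : (k : ℝ) * h ≤ H := by
          calc (k : ℝ) * h ≤ (N : ℝ) * h := by
                apply mul_le_mul_of_nonneg_right _ (le_of_lt hhpos)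
                exact_mod_cast hkN
            _ = H := hNh
        have hk1h : ((k : ℝ) + 1) * h ≤ H := by
          calc ((k : ℝ) + 1) * h ≤ (N : ℝ) * h := by
                apply mul_le_mul_of_nonneg_right _ (le_of_lt hhpos)
                exact_mod_cast hk1
            _ = H := hNh
        have hdw_low : d₀ ≤ infDist w M := by
          have : (0:ℝ) ≤ k * γ := by positivity
          linarith
        have hdw_pos : 0 < infDist w M := lt_of_lt_of_le hd0 hdw_low
        have hXw : ‖dirX M w‖ = 1 := norm_dirX hM hne hdw_pos
        refine ⟨w + h • dirX M w, ?_⟩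
        set w' := w + h • dirX M w with hw'def
        have hdist' : dist w' w = h := by
          rw [hw'def, dist_eq_norm]
          have : w + h • dirX M w - w = h • dirX M w := by abel
          rw [this, norm_smul, hXw, Real.norm_eq_abs, abs_of_pos hhpos, mul_one]
        have hd'_ge : infDist w M - h ≤ infDist w' M := by
          have h2 := infDist_le_infDist_add_dist (x := w) (y := w') (s := M)
          rw [dist_comm w w'] at h2
          rw [hdist'] at h2
          linarith
        have hd'_le : infDist w' M ≤ infDist w M + h := by
          have h2 := infDist_le_infDist_add_dist (x := w') (y := w) (s := M)
          rw [hdist'] at h2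
          exact h2
        have hd'_half : d₀ / 2 ≤ infDist w' M := by linarith
        have hd'_pos : 0 < infDist w' M := lt_of_lt_of_le (by linarith) hd'_half
        have hdistx₀ : dist w' x₀ ≤ ((k : ℝ) + 1) * h := by
          calc dist w' x₀ ≤ dist w' w + dist w x₀ := dist_triangle _ _ _
            _ ≤ h + k * h := add_le_add (le_of_eq hdist') ih1
            _ = ((k : ℝ) + 1) * h := by ring
        have hwK : w ∈ K := by
          refine ⟨mem_closedBall.mpr (le_trans ih1 (by linarith)), ?_, ?_⟩
          · linarith
          · linarith
        have hw'K : w' ∈ K := by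
          refine ⟨mem_closedBall.mpr (le_trans hdistx₀ (by linarith)), ?_, ?_⟩
          · exact hd'_half
          · linarith
        have hXclose : dist (dirX M w') (dirX M w) < ε := by
          apply hδ _ hw'K _ hwK
          rw [hdist']
          exact hhδ
        have hXw' : ‖dirX M w'‖ = 1 := norm_dirX hM hne hd'_pos
        have hinner : 1 - ε ^ 2 / 2 ≤ ⟪dirX M w', dirX M w⟫ := by
          have hns : ‖dirX M w' - dirX M w‖ ^ 2
              = 2 - 2 * ⟪dirX M w', dirX M w⟫ := by
            rw [norm_sub_sq_real, hXw, hXw']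
            ring
          have h5 : ‖dirX M w' - dirX M w‖ < ε := by
            rw [← dist_eq_norm]
            exact hXclose
          nlinarith [norm_nonneg (dirX M w' - dirX M w)]
        have hatomic := atomic_step hM hne (x := w) (w₀ := dirX M w) hXw (h := h)
          (by rw [← hw'def]; exact hd'_pos)
        rw [← hw'def] at hatomic
        have herr : h ^ 2 / (2 * infDist w' M) ≤ h ^ 2 / d₀ := by
          apply div_le_div_of_nonneg_left (by positivity) hd0
          linarith
        have hgain : infDist w M + γ ≤ infDist w' M := by
          have h1 : h * (1 - ε ^ 2 / 2) ≤ h * ⟪dirX M w', dirX M w⟫ :=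
            mul_le_mul_of_nonneg_left hinner (le_of_lt hhpos)
          rw [hγdef]
          linarith
        refine ⟨?_, ?_, ?_⟩
        · push_cast
          linarith
        · push_cast
          linarith
        · push_cast
          linarith
    obtain ⟨v, i1, i2, i3⟩ := ind N (le_refl N)
    refine ⟨v, mem_closedBall.mpr (le_trans i1 (le_of_eq hNh)), ?_⟩
    -- final estimate
    have hNγ : (N : ℝ) * γ ≥ H - ε' := by
      have e1 : (N : ℝ) * γ = H - H * ε ^ 2 / 2 - H * h / d₀ := by
        rw [hγdef, mul_sub]
        have t1 : (N : ℝ) * (h * (1 - ε ^ 2 / 2)) = H - H * ε ^ 2 / 2 := by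
          rw [← hNh]; ring
        have t2 : (N : ℝ) * (h ^ 2 / d₀) = H * h / d₀ := by
          rw [← hNh]; ring
        rw [t1, t2]
      have e2 : H * ε ^ 2 / 2 ≤ ε' / 2 := by
        have : H * ε ≤ H + 1 := by nlinarith
        have hεε : ε * (H + 1) ≤ ε' := by
          rw [← le_div_iff₀ (by positivity)]
          exact hε2
        nlinarith
      have e3 : H * h / d₀ ≤ ε' / 2 := by
        rw [div_le_iff₀ hd0]
        have : h * (2 * (H + 1)) ≤ d₀ * ε' := by
          rw [← le_div_iff₀ (by positivity)]
          exact hhε'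
        nlinarith
      linarith [e1, e2, e3]
    linarith
  -- Step 2 : the maximizer
  obtain ⟨xs, hxsmem, hmax⟩ := (isCompact_closedBall x₀ H).exists_isMaxOn
    ⟨x₀, mem_closedBall_self (le_of_lt hHpos)⟩
    (continuous_infDist_pt M).continuousOn
  have hxs_le : infDist xs M ≤ S := by
    have := infDist_le_infDist_add_dist (x := xs) (y := x₀) (s := M)
    have h2 : dist xs x₀ ≤ H := mem_closedBall.mp hxsmem
    rw [hHdef] at h2
    linarith
  have hxs_ge : S ≤ infDist xs M := by
    apply le_of_forall_pos_le_add
    intro ε hε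
    obtain ⟨v, hv, hvd⟩ := step1 ε hε
    have := hmax hv
    simp only [mem_setOf_eq] at this
    linarith [this]
  have hxsS : infDist xs M = S := le_antisymm hxs_le hxs_ge
  have hdist_xs : dist xs x₀ = H := by
    have h1 : dist xs x₀ ≤ H := mem_closedBall.mp hxsmem
    have h2 : S ≤ d₀ + dist xs x₀ := by
      have := infDist_le_infDist_add_dist (x := xs) (y := x₀) (s := M)
      linarith
    have : H ≤ dist xs x₀ := by rw [hHdef]; linarith
    linarith
  -- Step 3 : rigidity
  have hpM : p ∈ M := (projM_spec hM hne x₀).1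
  have hx₀p : dist x₀ p = d₀ := (projM_spec hM hne x₀).2.symm
  have hxsp : dist xs p = S := by
    have h1 : S ≤ dist xs p := by
      rw [← hxsS]
      exact infDist_le_dist_of_mem hpM
    have h2 : dist xs p ≤ dist xs x₀ + dist x₀ p := dist_triangle _ _ _
    rw [hdist_xs, hx₀p, hHdef] at h2
    have : dist xs p ≤ S := by linarith
    linarith
  set A := xs - x₀ with hAdef
  set B := x₀ - p with hBdef
  have hnA : ‖A‖ = H := by rw [hAdef, ← dist_eq_norm]; exact hdist_xs
  have hnB : ‖B‖ = d₀ := by rw [hBdef, ← dist_eq_norm]; exact hx₀p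
  have hnAB : ‖A + B‖ = S := by
    have : A + B = xs - p := by rw [hAdef, hBdef]; abel
    rw [this, ← dist_eq_norm]
    exact hxsp
  have hip : ⟪A, B⟫ = H * d₀ := by
    have := norm_add_sq_real A B
    rw [hnA, hnB, hnAB] at this
    have hS : S = H + d₀ := by rw [hHdef]; ring
    nlinarith
  have hcol : d₀ • A = H • B := by
    have hz : ‖d₀ • A - H • B‖ ^ 2 = 0 := by
      rw [norm_sub_sq_real, norm_smul, norm_smul, real_inner_smul_left,
        real_inner_smul_right, hip, hnA, hnB]
      simp only [Real.norm_eq_abs, abs_of_pos hd0, abs_of_pos hHpos]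
      ring
    have := pow_eq_zero_iff (n := 2) (by norm_num) |>.mp hz
    rwa [norm_eq_zero, sub_eq_zero] at this
  have hq : p + (S / d₀) • (x₀ - p) = xs := by
    have h1 : (S / d₀) • B = B + A := by
      have e1 : S / d₀ = 1 + H / d₀ := by
        rw [hHdef]; field_simp; ring
      rw [e1, add_smul, one_smul]
      congr 1
      rw [div_eq_mul_inv, mul_comm, mul_smul, ← hcol, smul_smul,
        inv_mul_cancel₀ hd0.ne', one_smul]
    rw [← hBdef, h1, hBdef, hAdef]
    abel
  rw [hq, hxsS]

/-- half-space inequality obtained from the extension lemma -/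
lemma federer_realized {M : Set E} (hM : IsClosed M) (hne : M.Nonempty) {τ : ℝ}
    (hreach : ∀ w : E, infDist w M < τ → ∃! y, y ∈ M ∧ dist w y = infDist w M)
    {x₀ y : E} (hy : y ∈ M) (hd0 : 0 < infDist x₀ M) {S : ℝ}
    (hdS : infDist x₀ M ≤ S) (hSτ : S < τ) :
    2 * S * ⟪(infDist x₀ M)⁻¹ • (x₀ - projM M x₀), y - projM M x₀⟫
      ≤ ‖y - projM M x₀‖ ^ 2 := by
  set d₀ := infDist x₀ M with hd₀def
  set p := projM M x₀ with hpdef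
  set u := d₀⁻¹ • (x₀ - p) with hudef
  have hu1 : ‖u‖ = 1 := by
    rw [hudef, norm_smul, norm_inv, Real.norm_eq_abs, abs_of_pos hd0,
      dist_projM hM hne, inv_mul_cancel₀ hd0.ne']
  have hext := ext_lemma hM hne hreach hd0 hdS hSτ
  have hsmul : (S / d₀) • (x₀ - p) = S • u := by
    rw [hudef, smul_smul, div_eq_mul_inv]
  rw [hsmul] at hext
  have hdist : S ≤ dist (p + S • u) y := by
    have h0 := infDist_le_dist_of_mem (s := M) (x := p + S • u) hy
    rwa [hext] at h0
  have hexp : dist (p + S • u) y ^ 2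
      = S ^ 2 - 2 * S * ⟪u, y - p⟫ + ‖y - p‖ ^ 2 := by
    rw [dist_eq_norm]
    have : p + S • u - y = S • u - (y - p) := by abel
    rw [this, norm_sub_sq_real, norm_smul, real_inner_smul_left, Real.norm_eq_abs]
    rw [hu1]
    have hS0 : 0 < S := lt_of_lt_of_le hd0 hdS
    rw [abs_of_pos hS0]
    ring
  have h2 : S ^ 2 ≤ dist (p + S • u) y ^ 2 := by
    apply pow_le_pow_left₀ (le_of_lt (lt_of_lt_of_le hd0 hdS)) hdist
  rw [hexp] at h2
  linarith

/-- passing a family of half-space inequalities to the limit radius -/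
lemma le_at_tau {τ δ₀ a b : ℝ} (hb : 0 ≤ b) (hδ₀ : 0 ≤ δ₀) (hδτ : δ₀ < τ)
    (hall : ∀ S, δ₀ ≤ S → S < τ → 2 * S * a ≤ b) : 2 * τ * a ≤ b := by
  by_contra hcon
  push_neg at hcon
  have hτpos : 0 < τ := lt_of_le_of_lt hδ₀ hδτ
  have ha : 0 < a := by nlinarith
  have hbτ : b / (2 * a) < τ := by
    rw [div_lt_iff₀ (by positivity)]
    nlinarith
  have hb2a : 0 ≤ b / (2 * a) := by positivity
  set m := max δ₀ ((b / (2 * a) + τ) / 2) with hmdef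
  have hm1 : δ₀ ≤ m := le_max_left _ _
  have hm2 : m < τ := max_lt hδτ (by linarith)
  have hm3 : b / (2 * a) < m := lt_of_lt_of_le (by linarith) (le_max_right _ _)
  have hle := hall m hm1 hm2
  rw [div_lt_iff₀ (by positivity)] at hm3
  nlinarith

end

end AuxReach

section Main

open Metric Filter Set
open scoped Topology RealInnerProductSpace

set_option maxHeartbeats 2000000 in
/-- Let M ⊂ ℝ^D be closed with reach τ > 0, z with δ = d(z,M) < τ and nearest point z*,
and η ∈ M with ‖z − η‖ ≤ r where δ ≤ r < τ. Writing η − z* = η̄ + η̂ with η̄ ∈ T_{z*}M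
and η̂ ⊥ T_{z*}M, we have ‖η̂‖ ≤ (r² − δ²)/(2(τ − δ)). -/
theorem normal_component_bound
    (D : ℕ) (M : Set (EuclideanSpace ℝ (Fin D))) (hM : IsClosed M)
    (τ : ℝ) (hτ : 0 < τ)
    (hreach : ∀ w : EuclideanSpace ℝ (Fin D), infDist w M < τ →
      ∃! y, y ∈ M ∧ dist w y = infDist w M)
    (z zstar : EuclideanSpace ℝ (Fin D))
    (hzstar : zstar ∈ M ∧ dist z zstar = infDist z M)
    (r : ℝ) (hδr : infDist z M ≤ r) (hrτ : r < τ)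
    (T : Submodule ℝ (EuclideanSpace ℝ (Fin D)))
    (hT : (T : Set (EuclideanSpace ℝ (Fin D))) = tangentConeAt ℝ M zstar)
    (η : EuclideanSpace ℝ (Fin D)) (hη : η ∈ M) (hηz : ‖z - η‖ ≤ r)
    (ηbar ηhat : EuclideanSpace ℝ (Fin D))
    (hdecomp : η - zstar = ηbar + ηhat)
    (hbar : ηbar ∈ T)
    (hhat : ∀ v ∈ T, inner (𝕜 := ℝ) ηhat v = 0) :
    ‖ηhat‖ ≤ (r ^ 2 - infDist z M ^ 2) / (2 * (τ - infDist z M)) := by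
  obtain ⟨hzM, hzd⟩ := hzstar
  have hne : M.Nonempty := ⟨zstar, hzM⟩
  have hδ0 : (0:ℝ) ≤ infDist z M := infDist_nonneg
  have hδτ : infDist z M < τ := lt_of_le_of_lt hδr hrτ
  have hτδ : (0:ℝ) < τ - infDist z M := by linarith
  have hr0 : (0:ℝ) ≤ r := le_trans hδ0 hδr
  by_cases hη0 : ηhat = 0
  · rw [hη0, norm_zero]
    apply div_nonneg _ (by linarith)
    nlinarith
  -- the unit normal direction
  set v : EuclideanSpace ℝ (Fin D) := ‖ηhat‖⁻¹ • ηhat with hvdef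
  have hvnorm : ‖v‖ = 1 := norm_smul_inv_norm hη0
  have hvne : v ≠ 0 := by
    intro h0
    rw [h0, norm_zero] at hvnorm
    norm_num at hvnorm
  have hinner_v : ⟪v, η - zstar⟫ = ‖ηhat‖ := by
    rw [hdecomp, inner_add_right]
    have h1 : ⟪v, ηbar⟫ = 0 := by
      rw [hvdef, real_inner_smul_left]
      rw [hhat ηbar hbar, mul_zero]
    have h2 : ⟪v, ηhat⟫ = ‖ηhat‖ := by
      rw [hvdef, real_inner_smul_left, real_inner_self_eq_norm_sq, sq]
      rw [← mul_assoc, inv_mul_cancel₀ (norm_ne_zero_iff.mpr hη0), one_mul]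
    rw [h1, h2, zero_add]
  -- F1 : Federer-type inequality in the normal direction ηhat
  have hFS1 : ∀ S : ℝ, 0 < S → S < τ → 2 * S * ‖ηhat‖ ≤ ‖η - zstar‖ ^ 2 := by
    intro S hS0 hSτ'
    set t : ℕ → ℝ := fun n => S / ((n : ℝ) + 1) with htdef
    have ht_pos : ∀ n, 0 < t n := by
      intro n
      rw [htdef]
      positivity
    have ht_leS : ∀ n, t n ≤ S := by
      intro n
      rw [htdef, div_le_iff₀ (by positivity)]
      nlinarith [Nat.cast_nonneg (α := ℝ) n]
    have ht0 : Tendsto t atTop (𝓝 0) := by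
      apply Tendsto.div_atTop (tendsto_const_nhds (x := S))
      exact tendsto_atTop_add_const_right _ 1 tendsto_natCast_atTop_atTop
    set b : ℕ → EuclideanSpace ℝ (Fin D) := fun n => projM M (zstar + t n • v) with hbdef
    set w : ℕ → EuclideanSpace ℝ (Fin D) := fun n => (t n)⁻¹ • (b n - zstar) with hwdef
    have hbM : ∀ n, b n ∈ M := fun n => (projM_spec hM hne _).1
    have hbz : ∀ n, b n - zstar = t n • w n := by
      intro n
      rw [hwdef]
      simp only
      rw [smul_inv_smul₀ (ht_pos n).ne']
    have hd_le : ∀ n, infDist (zstar + t n • v) M ≤ t n := by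
      intro n
      have h1 := infDist_le_dist_of_mem (x := zstar + t n • v) hzM
      rw [dist_eq_norm] at h1
      have h2 : zstar + t n • v - zstar = t n • v := by abel
      rw [h2, norm_smul, Real.norm_eq_abs, abs_of_pos (ht_pos n), hvnorm, mul_one] at h1
      exact h1
    have hxb_eq : ∀ n, zstar + t n • v - b n = t n • (v - w n) := by
      intro n
      rw [smul_sub, ← hbz n]
      abel
    have hd_eq : ∀ n, infDist (zstar + t n • v) M = t n * ‖v - w n‖ := by
      intro n
      rw [← dist_projM hM hne (zstar + t n • v)]
      show ‖zstar + t n • v - b n‖ = _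
      rw [hxb_eq n, norm_smul, Real.norm_eq_abs, abs_of_pos (ht_pos n)]
    have hvw_le1 : ∀ n, ‖v - w n‖ ≤ 1 := by
      intro n
      have h1 := hd_le n
      rw [hd_eq n] at h1
      exact (mul_le_iff_le_one_right (ht_pos n)).mp h1
    have hw_ineq : ∀ n, ‖w n‖ ^ 2 ≤ 2 * ⟪v, w n⟫ := by
      intro n
      have h1 : ‖v - w n‖ ^ 2 ≤ 1 := by
        nlinarith [hvw_le1 n, norm_nonneg (v - w n)]
      rw [norm_sub_sq_real, hvnorm] at h1
      nlinarith [h1]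
    have hw_bd : ∀ n, ‖w n‖ ≤ 2 := by
      intro n
      have h1 := hw_ineq n
      have h2 : ⟪v, w n⟫ ≤ ‖w n‖ := by
        have h3 := real_inner_le_norm v (w n)
        rwa [hvnorm, one_mul] at h3
      nlinarith [norm_nonneg (w n)]
    -- the normal components of the nearest points vanish at first order
    have hw0 : Tendsto w atTop (𝓝 0) := by
      apply tendsto_of_subseq_tendsto
      intro ns hns
      have hmem : ∀ k, w (ns k) ∈ closedBall (0 : EuclideanSpace ℝ (Fin D)) 2 := by
        intro k
        rw [mem_closedBall, dist_zero_right]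
        exact hw_bd _
      obtain ⟨ξ, -, ms, hms, hlim⟩ := tendsto_subseq_of_bounded isBounded_closedBall hmem
      refine ⟨ms, ?_⟩
      have hlim2 : Tendsto (fun k => w (ns (ms k))) atTop (𝓝 ξ) := hlim
      have hξ0 : ξ = 0 := by
        by_contra hξne
        have hξnorm : (0:ℝ) < ‖ξ‖ := norm_pos_iff.mpr hξne
        have hv_ineq : ‖ξ‖ ^ 2 ≤ 2 * ⟪v, ξ⟫ := by
          refine le_of_tendsto_of_tendsto ((hlim2.norm).pow 2)
            (tendsto_const_nhds.mul (tendsto_const_nhds.inner hlim2))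
            (Eventually.of_forall fun k => hw_ineq _)
        have hρ : ∀ k, ‖b (ns (ms k)) - zstar‖ = t (ns (ms k)) * ‖w (ns (ms k))‖ := by
          intro k
          rw [hbz, norm_smul, Real.norm_eq_abs, abs_of_pos (ht_pos _)]
        have hev : ∀ᶠ k in atTop, ‖ξ‖ / 2 ≤ ‖w (ns (ms k))‖ := by
          apply (hlim2.norm).eventually (eventually_ge_nhds (by linarith))
        have hcone : (‖ξ‖⁻¹ • ξ) ∈ tangentConeAt ℝ M zstar := by
          refine (fun (c : ℕ → ℝ) (d : ℕ → EuclideanSpace ℝ (Fin D))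
            (h1 : ∀ᶠ n in atTop, zstar + d n ∈ M) (h2 : Tendsto (fun n => ‖c n‖) atTop atTop)
            (h3 : Tendsto (fun n => c n • d n) atTop (𝓝 (‖ξ‖⁻¹ • ξ))) =>
              mem_tangentConeAt_of_seq atTop c d (tangentConeAt.lim_zero atTop h2 h3) h1 h3)
            (fun k => (‖b (ns (ms k)) - zstar‖)⁻¹) (fun k => b (ns (ms k)) - zstar) ?_ ?_ ?_
          · apply Eventually.of_forall
            intro k
            have h4 : zstar + (b (ns (ms k)) - zstar) = b (ns (ms k)) := by abel
            rw [h4]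
            exact hbM _
          · apply tendsto_atTop_mono' atTop (f₁ := fun k => (2 * t (ns (ms k)))⁻¹)
            · filter_upwards [hev] with k hk
              have htk := ht_pos (ns (ms k))
              have hwpos : 0 < ‖w (ns (ms k))‖ := lt_of_lt_of_le (by positivity) hk
              have hρpos : 0 < ‖b (ns (ms k)) - zstar‖ := by
                rw [hρ k]
                positivity
              have hρle : ‖b (ns (ms k)) - zstar‖ ≤ 2 * t (ns (ms k)) := by
                rw [hρ k]
                nlinarith [hw_bd (ns (ms k))]
              rw [Real.norm_eq_abs, abs_of_pos (inv_pos.mpr hρpos)]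
              exact inv_anti₀ hρpos hρle
            · apply Tendsto.comp tendsto_inv_nhdsGT_zero
              apply tendsto_nhdsWithin_of_tendsto_nhds_of_eventually_within
              · have h5 : Tendsto (fun k => t (ns (ms k))) atTop (𝓝 0) :=
                  ht0.comp (hns.comp hms.tendsto_atTop)
                have h6 := h5.const_mul (2:ℝ)
                simpa using h6
              · exact Eventually.of_forall fun k => by
                  have := ht_pos (ns (ms k))
                  exact mem_Ioi.mpr (by positivity)
          · have hcd : (fun k => (‖b (ns (ms k)) - zstar‖)⁻¹ • (b (ns (ms k)) - zstar))
                = fun k => ‖w (ns (ms k))‖⁻¹ • w (ns (ms k)) := by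
              funext k
              rw [hρ k, hbz (ns (ms k)), mul_inv, smul_smul, mul_comm ((t (ns (ms k)))⁻¹) _,
                mul_assoc, inv_mul_cancel₀ (ht_pos (ns (ms k))).ne', mul_one]
            rw [hcd]
            have hcont : ContinuousAt (fun y : EuclideanSpace ℝ (Fin D) => ‖y‖⁻¹ • y) ξ :=
              ((continuous_norm.continuousAt).inv₀ (norm_ne_zero_iff.mpr hξne)).smul
                continuousAt_id
            exact hcont.tendsto.comp hlim2
        rw [← hT] at hcone
        have hinner0 := hhat _ hcone
        rw [real_inner_smul_right] at hinner0
        have hinner0' : ⟪ηhat, ξ⟫ = 0 := by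
          rcases mul_eq_zero.mp hinner0 with h | h
          · exact absurd h (inv_ne_zero (norm_ne_zero_iff.mpr hξne))
          · exact h
        have hvξ : ⟪v, ξ⟫ = 0 := by
          rw [hvdef, real_inner_smul_left, hinner0', mul_zero]
        rw [hvξ, mul_zero] at hv_ineq
        nlinarith [hv_ineq, hξnorm]
      rw [hξ0] at hlim
      exact hlim
    -- eventual inequalities from the extension lemma
    have hev_half : ∀ᶠ n in atTop, ‖w n‖ < 1/2 := by
      have h1 : Tendsto (fun n => ‖w n‖) atTop (𝓝 0) := by
        simpa using hw0.norm
      exact h1.eventually (eventually_lt_nhds (by norm_num))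
    have hineq : ∀ᶠ n in atTop,
        2 * S * ⟪‖v - w n‖⁻¹ • (v - w n), η - b n⟫ ≤ ‖η - b n‖ ^ 2 := by
      filter_upwards [hev_half] with n hn
      have hvw_pos : 0 < ‖v - w n‖ := by
        have h1 := norm_sub_norm_le v (w n)
        rw [hvnorm] at h1
        linarith
      have hdpos : 0 < infDist (zstar + t n • v) M := by
        rw [hd_eq n]
        positivity
      have hfr := federer_realized hM hne hreach (y := η) hη hdpos
        ((hd_le n).trans (ht_leS n)) hSτ'
      have hu : (infDist (zstar + t n • v) M)⁻¹ • (zstar + t n • v - projM M (zstar + t n • v))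
          = ‖v - w n‖⁻¹ • (v - w n) := by
        rw [show projM M (zstar + t n • v) = b n from rfl]
        rw [hd_eq n, hxb_eq n, mul_inv, smul_smul, mul_comm ((t n)⁻¹) _,
          mul_assoc, inv_mul_cancel₀ (ht_pos n).ne', mul_one]
      rw [hu] at hfr
      rw [show projM M (zstar + t n • v) = b n from rfl] at hfr
      exact hfr
    -- limits
    have htw0 : Tendsto (fun n => t n • w n) atTop (𝓝 0) := by
      apply squeeze_zero_norm (a := fun n => 2 * t n)
      · intro n
        rw [norm_smul, Real.norm_eq_abs, abs_of_pos (ht_pos n)]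
        nlinarith [hw_bd n, (ht_pos n).le]
      · simpa using ht0.const_mul (2:ℝ)
    have hb_lim : Tendsto b atTop (𝓝 zstar) := by
      have h7 : b = fun n => zstar + t n • w n := by
        funext n
        have h8 := hbz n
        rw [← h8]
        abel
      rw [h7]
      simpa using (tendsto_const_nhds (x := zstar)).add htw0
    have hu_lim : Tendsto (fun n => ‖v - w n‖⁻¹ • (v - w n)) atTop (𝓝 v) := by
      have hcont : ContinuousAt (fun y : EuclideanSpace ℝ (Fin D) => ‖y‖⁻¹ • y) v :=
        ((continuous_norm.continuousAt).inv₀ (norm_ne_zero_iff.mpr hvne)).smul continuousAt_id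
      have hvw : Tendsto (fun n => v - w n) atTop (𝓝 v) := by
        simpa using (tendsto_const_nhds (x := v)).sub hw0
      have h9 := hcont.tendsto.comp hvw
      simp only [hvnorm, inv_one, one_smul] at h9
      exact h9
    have hlhs : Tendsto (fun n => 2 * S * ⟪‖v - w n‖⁻¹ • (v - w n), η - b n⟫) atTop
        (𝓝 (2 * S * ⟪v, η - zstar⟫)) :=
      tendsto_const_nhds.mul (hu_lim.inner ((tendsto_const_nhds (x := η)).sub hb_lim))
    have hrhs : Tendsto (fun n => ‖η - b n‖ ^ 2) atTop (𝓝 (‖η - zstar‖ ^ 2)) :=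
      (((tendsto_const_nhds (x := η)).sub hb_lim).norm).pow 2
    have hfin := le_of_tendsto_of_tendsto hlhs hrhs hineq
    rwa [hinner_v] at hfin
  have F1 : 2 * τ * ‖ηhat‖ ≤ ‖η - zstar‖ ^ 2 := by
    apply le_at_tau (by positivity) (le_of_lt (half_pos hτ)) (by linarith)
    intro S hS1 hS2
    exact hFS1 S (lt_of_lt_of_le (half_pos hτ) hS1) hS2
  -- F2 : half-space inequality in the direction of z - zstar
  have F2 : 2 * τ * ⟪z - zstar, η - zstar⟫ ≤ infDist z M * ‖η - zstar‖ ^ 2 := by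
    rcases eq_or_lt_of_le hδ0 with hδz | hδpos
    · have hz : z = zstar := by
        have h1 : dist z zstar = 0 := by rw [hzd, ← hδz]
        rwa [dist_eq_zero] at h1
      rw [hz, sub_self, inner_zero_left, mul_zero, ← hz, ← hδz, zero_mul]
    · have hzdτ : infDist z M < τ := hδτ
      have hproj : zstar = projM M z := projM_eq hM hne hreach hzdτ hzM hzd
      apply le_at_tau (by positivity) hδ0 hδτ
      intro S hS1 hS2
      have hfr := federer_realized hM hne hreach (y := η) hη hδpos hS1 hS2
      rw [← hproj, real_inner_smul_left] at hfr
      have h3 := mul_le_mul_of_nonneg_left hfr hδ0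
      calc 2 * S * ⟪z - zstar, η - zstar⟫
          = infDist z M * (2 * S * ((infDist z M)⁻¹ * ⟪z - zstar, η - zstar⟫)) := by
            field_simp
        _ ≤ infDist z M * ‖η - zstar‖ ^ 2 := h3
  -- the chain of inequalities
  have CH : ‖z - η‖ ^ 2
      = infDist z M ^ 2 - 2 * ⟪z - zstar, η - zstar⟫ + ‖η - zstar‖ ^ 2 := by
    have h1 : z - η = (z - zstar) - (η - zstar) := by abel
    rw [h1, norm_sub_sq_real]
    have h2 : ‖z - zstar‖ = infDist z M := by rw [← hzd, dist_eq_norm]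
    rw [h2]
  have hrr : ‖z - η‖ ^ 2 ≤ r ^ 2 := pow_le_pow_left₀ (norm_nonneg _) hηz 2
  rw [le_div_iff₀ (by linarith)]
  have c1 : infDist z M ^ 2 - 2 * ⟪z - zstar, η - zstar⟫ + ‖η - zstar‖ ^ 2 ≤ r ^ 2 := by
    rw [← CH]
    exact hrr
  have k1 : ‖η - zstar‖ ^ 2 * (τ - infDist z M) ≤ τ * (r ^ 2 - infDist z M ^ 2) := by
    nlinarith [mul_le_mul_of_nonneg_left c1 hτ.le, F2]
  have k2 : 2 * τ * ‖ηhat‖ * (τ - infDist z M) ≤ ‖η - zstar‖ ^ 2 * (τ - infDist z M) :=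
    mul_le_mul_of_nonneg_right F1 hτδ.le
  nlinarith [k1, k2, hτ]


end Main
end
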